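/- arXiv:2602.11306 — 9 statements merged into one kernel-verified Lean document; each statement's English description precedes it below -/
import Mathlib

section
/- Let 𝔤 be a Lie algebra over a field of characteristic zero and let R : 𝔤 → 𝔤 be a linear map satisfying the modified classical Yang–Baxter equation. Then the R-bracket [X,Y]_R = (1/2)([R(X),Y] + [X,R(Y)]) is bilinear, alternating, and satisfies the Jacobi identity; hence (𝔤, [·,·]_R) is again a Lie algebra, denoted 𝔤_R. -/
/-- The `R`-bracket `[X,Y]_R = (1/2)([R(X),Y] + [X,R(Y)])` associated to a linear map `R`
on a Lie algebra. -/
def rBracket {K : Type*} [Field K] {L : Type*} [LieRing L] [LieAlgebra K L]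
    (R : L →ₗ[K] L) (X Y : L) : L :=
  (2 : K)⁻¹ • (⁅R X, Y⁆ + ⁅X, R Y⁆)

/-- If `R` is a linear solution of the modified classical Yang–Baxter equation on a Lie
algebra `𝔤` over a field of characteristic zero, then the `R`-bracket is bilinear,
alternating and satisfies the Jacobi identity, i.e. `(𝔤, [·,·]_R)` is a Lie algebra. -/
theorem statement0 {K : Type*} [Field K] [CharZero K] {L : Type*} [LieRing L] [LieAlgebra K L]
    (R : L →ₗ[K] L)
    (hR : ∀ X Y : L, ⁅R X, R Y⁆ - R (⁅R X, Y⁆ + ⁅X, R Y⁆) = -⁅X, Y⁆) :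
    (∀ (a : K) (X X' Y : L),
        rBracket R (a • X + X') Y = a • rBracket R X Y + rBracket R X' Y) ∧
    (∀ (a : K) (X Y Y' : L),
        rBracket R X (a • Y + Y') = a • rBracket R X Y + rBracket R X Y') ∧
    (∀ X : L, rBracket R X X = 0) ∧
    (∀ X Y Z : L,
        rBracket R X (rBracket R Y Z) + rBracket R Y (rBracket R Z X)
          + rBracket R Z (rBracket R X Y) = 0) := by
  have hR' : ∀ Y Z : L, R (⁅R Y, Z⁆ + ⁅Y, R Z⁆) = ⁅R Y, R Z⁆ + ⁅Y, Z⁆ := by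
    intro Y Z
    have h := hR Y Z
    rw [sub_eq_iff_eq_add] at h
    rw [h]; abel
  refine ⟨?_, ?_, ?_, ?_⟩
  · intro a X X' Y
    simp only [rBracket, map_add, map_smul, add_lie, smul_lie, lie_add, smul_add]
    module
  · intro a X Y Y'
    simp only [rBracket, map_add, map_smul, lie_add, lie_smul, add_lie, smul_add]
    module
  · intro X
    simp only [rBracket]
    rw [← lie_skew X (R X), add_neg_cancel, smul_zero]
  · intro X Y Z
    simp only [rBracket, map_smul, lie_smul]
    rw [hR' Y Z, hR' Z X, hR' X Y]
    have j1 : ⁅R X, ⁅R Y, Z⁆⁆ + ⁅R Y, ⁅Z, R X⁆⁆ + ⁅Z, ⁅R X, R Y⁆⁆ = 0 := lie_jacobi (R X) (R Y) Z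
    have j2 : ⁅R Y, ⁅R Z, X⁆⁆ + ⁅R Z, ⁅X, R Y⁆⁆ + ⁅X, ⁅R Y, R Z⁆⁆ = 0 := lie_jacobi (R Y) (R Z) X
    have j3 : ⁅R Z, ⁅R X, Y⁆⁆ + ⁅R X, ⁅Y, R Z⁆⁆ + ⁅Y, ⁅R Z, R X⁆⁆ = 0 := lie_jacobi (R Z) (R X) Y
    have j4 : ⁅X, ⁅Y, Z⁆⁆ + ⁅Y, ⁅Z, X⁆⁆ + ⁅Z, ⁅X, Y⁆⁆ = 0 := lie_jacobi X Y Z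
    simp only [lie_add, smul_add]
    linear_combination (norm := module) ((2:K)⁻¹ * (2:K)⁻¹) • j1 + ((2:K)⁻¹ * (2:K)⁻¹) • j2
      + ((2:K)⁻¹ * (2:K)⁻¹) • j3 + ((2:K)⁻¹ * (2:K)⁻¹) • j4
end

section
/- Let 𝔤 be a Lie algebra over a field of characteristic zero and let R : 𝔤 → 𝔤 be a linear solution of the mCYBE. Then the map i_R : 𝔤 → 𝔤 × 𝔤 defined by i_R(X) = (R_+(X), R_−(X)) is an injective Lie algebra homomorphism from 𝔤_R = (𝔤, [·,·]_R) into the direct sum Lie algebra 𝔤 ⊕ 𝔤 with componentwise bracket. Moreover, every X ∈ 𝔤 can be written uniquely as X = X_+ − X_− with (X_+, X_−) in the image of i_R, namely X_± = R_±(X). -/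
/-- `R₊ = (1/2)(R + id)`. -/
def Rplus {K : Type*} [Field K] {L : Type*} [LieRing L] [LieAlgebra K L]
    (R : L →ₗ[K] L) : L →ₗ[K] L :=
  (2 : K)⁻¹ • (R + LinearMap.id)

/-- `R₋ = (1/2)(R − id)`. -/
def Rminus {K : Type*} [Field K] {L : Type*} [LieRing L] [LieAlgebra K L]
    (R : L →ₗ[K] L) : L →ₗ[K] L :=
  (2 : K)⁻¹ • (R - LinearMap.id)

lemma Rplus_sub_Rminus {K : Type*} [Field K] [CharZero K] {L : Type*} [LieRing L] [LieAlgebra K L]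
    (R : L →ₗ[K] L) (X : L) : Rplus R X - Rminus R X = X := by
  simp only [Rplus, Rminus, LinearMap.smul_apply, LinearMap.add_apply, LinearMap.sub_apply,
    LinearMap.id_apply]
  rw [← smul_sub]
  have : R X + X - (R X - X) = (2:K) • X := by
    rw [two_smul]; abel
  rw [this, smul_smul, inv_mul_cancel₀ (two_ne_zero), one_smul]

/-- The map `i_R : X ↦ (R₊X, R₋X)` is an injective Lie algebra homomorphism from
`𝔤_R` into the direct sum Lie algebra `𝔤 ⊕ 𝔤` (with componentwise bracket), and every
`X ∈ 𝔤` decomposes uniquely as `X = X₊ − X₋` with `(X₊, X₋)` in the image of `i_R`. -/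
theorem statement2 {K : Type*} [Field K] [CharZero K] {L : Type*} [LieRing L] [LieAlgebra K L]
    (R : L →ₗ[K] L)
    (hR : ∀ X Y : L, ⁅R X, R Y⁆ - R (⁅R X, Y⁆ + ⁅X, R Y⁆) = -⁅X, Y⁆) :
    Function.Injective (fun X : L => (Rplus R X, Rminus R X)) ∧
    (∀ X Y : L,
      (Rplus R (rBracket R X Y), Rminus R (rBracket R X Y))
        = (⁅Rplus R X, Rplus R Y⁆, ⁅Rminus R X, Rminus R Y⁆)) ∧
    (∀ X : L, ∃! q : L × L,
      q ∈ Set.range (fun Y : L => (Rplus R Y, Rminus R Y)) ∧ X = q.1 - q.2) := by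
  refine ⟨?_, ?_, ?_⟩
  · intro X Y h
    simp only [Prod.mk.injEq] at h
    have := congrArg₂ (· - ·) h.1 h.2
    simpa [Rplus_sub_Rminus] using this
  · intro X Y
    have hRab : R (⁅R X, Y⁆ + ⁅X, R Y⁆) = ⁅R X, R Y⁆ + ⁅X, Y⁆ := by
      have := hR X Y; linear_combination (norm := module) -this
    simp only [Prod.mk.injEq, Rplus, Rminus, rBracket, LinearMap.smul_apply, LinearMap.add_apply,
      LinearMap.sub_apply, LinearMap.id_apply, map_smul, hRab]
    constructor
    · simp only [smul_lie, lie_smul, add_lie, lie_add]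
      module
    · simp only [smul_lie, lie_smul, sub_lie, lie_sub]
      module
  · intro X
    refine ⟨(Rplus R X, Rminus R X), ⟨⟨X, rfl⟩, (Rplus_sub_Rminus R X).symm⟩, ?_⟩
    rintro q ⟨⟨Y, rfl⟩, hX⟩
    simp only at hX
    have hXY : X = Y := by rw [hX]; exact Rplus_sub_Rminus R Y
    subst hXY
    rfl
end

section
/- Fix n ≥ 1 and N ≥ 1. Suppose M_n(ℂ) = 𝔤_+ ∔ 𝔤_− is a direct sum of vector subspaces, with P_± the projection onto 𝔤_± along 𝔤_∓. For k = 1,…,N, let F_k : M_n(ℂ) → M_n(ℂ) be conjugation-equivariant maps, and let L₀ ∈ M_n(ℂ). Let g_± : ℝᴺ → GL_n(ℂ) be differentiable maps with g_±(0) = 1 such that (∂_{t^k} g_±(t)) g_±(t)⁻¹ ∈ 𝔤_± for all t ∈ ℝᴺ and all k, and which solve the factorization problem exp(− Σ_{k=1}^N t^k F_k(L₀)) = g_+(t)⁻¹ g_−(t) for all t ∈ ℝᴺ. Set L(t) := g_+(t) L₀ g_+(t)⁻¹. Then: (i) L(t) = g_−(t) L₀ g_−(t)⁻¹ for all t, and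 L(0) = L₀; (ii) L solves the hierarchy of Lax equations ∂_{t^k} L(t) = [P_+(F_k(L(t))), L(t)] = −[P_−(F_k(L(t))), L(t)] for k = 1,…,N; (iii) ∂_{t^k} g_+(t) = P_+(F_k(L(t))) g_+(t) and ∂_{t^k} g_−(t) = −P_−(F_k(L(t))) g_−(t) for all t and k. -/
open Matrix

namespace Stmt5Aux

section bridge
variable {n : ℕ}
attribute [local instance] Matrix.linftyOpNormedAddCommGroup Matrix.linftyOpNormedSpace
  Matrix.linftyOpNormedRing Matrix.linftyOpNormedAlgebra

lemma exp_hasDerivAt_linfty (Y : Matrix (Fin n) (Fin n) ℂ) :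
    HasDerivAt (fun s : ℝ => NormedSpace.exp (s • Y)) Y 0 := by
  have h := hasDerivAt_exp_smul_const (𝕂 := ℝ) Y 0
  simp at h; exact h

lemma exp_entry_hasDerivAt (Y : Matrix (Fin n) (Fin n) ℂ) (i j : Fin n) :
    HasDerivAt (fun s : ℝ => NormedSpace.exp (s • Y) i j) (Y i j) 0 := by
  have h := exp_hasDerivAt_linfty Y
  have h2 : HasDerivAt (fun s : ℝ =>
      LinearMap.toContinuousLinearMap (Matrix.entryLinearMap ℝ ℂ i j) (NormedSpace.exp (s • Y)))
      (LinearMap.toContinuousLinearMap (Matrix.entryLinearMap ℝ ℂ i j) Y) 0 :=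
    (LinearMap.toContinuousLinearMap
      (Matrix.entryLinearMap ℝ ℂ i j)).hasFDerivAt.comp_hasDerivAt 0 h
  exact h2

end bridge

end Stmt5Aux


attribute [local instance] Matrix.normedAddCommGroup Matrix.normedSpace

namespace Stmt5Aux
open Filter Topology

variable {n N : ℕ} {E : Type*} [NormedAddCommGroup E] [NormedSpace ℝ E]

local notation "M" => Matrix (Fin n) (Fin n) ℂ

/-- Derivative of `s ↦ exp (s • Y)` at `0`, with the entrywise sup norm instances. -/
lemma exp_hasDerivAt (Y : M) :
    HasDerivAt (fun s : ℝ => NormedSpace.exp (s • Y)) Y 0 :=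
  hasDerivAt_pi.mpr fun i => hasDerivAt_pi.mpr fun j => exp_entry_hasDerivAt Y i j

lemma entry_hasDerivAt {f : ℝ → M} {a : M} {s₀ : ℝ} (hf : HasDerivAt f a s₀) (i j : Fin n) :
    HasDerivAt (fun s => f s i j) (a i j) s₀ :=
  hasDerivAt_pi.mp (hasDerivAt_pi.mp hf i) j

/-- Product rule for matrix-valued functions of a real variable. -/
lemma hasDerivAt_mul {f g : ℝ → M} {a b : M} {s₀ : ℝ}
    (hf : HasDerivAt f a s₀) (hg : HasDerivAt g b s₀) :
    HasDerivAt (fun s => f s * g s) (a * g s₀ + f s₀ * b) s₀ := by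
  refine hasDerivAt_pi.mpr fun i => hasDerivAt_pi.mpr fun j => ?_
  have : (fun s => (f s * g s) i j) = fun s => ∑ l, f s i l * g s l j := by
    funext s; simp [Matrix.mul_apply]
  rw [this]
  have h := HasDerivAt.fun_sum (u := Finset.univ)
    (A := fun l s => f s i l * g s l j)
    (A' := fun l => a i l * g s₀ l j + f s₀ i l * b l j)
    (fun l _ => (entry_hasDerivAt hf i l).mul (entry_hasDerivAt hg l j))
  simpa [Matrix.mul_apply, Matrix.add_apply, Finset.sum_add_distrib] using h

lemma entry_differentiable {f : E → M} (hf : Differentiable ℝ f) (i j : Fin n) :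
    Differentiable ℝ fun t => f t i j :=
  differentiable_pi.mp (differentiable_pi.mp hf i) j

lemma differentiable_of_entries {f : E → M}
    (hf : ∀ i j, Differentiable ℝ fun t => f t i j) : Differentiable ℝ f :=
  differentiable_pi.mpr fun i => differentiable_pi.mpr fun j => hf i j

lemma differentiable_matmul {f g : E → M}
    (hf : Differentiable ℝ f) (hg : Differentiable ℝ g) :
    Differentiable ℝ fun t => f t * g t := by
  refine differentiable_of_entries fun i j => ?_
  have : (fun t => (f t * g t) i j) = fun t => ∑ l, f t i l * g t l j := by
    funext t; simp [Matrix.mul_apply]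
  rw [this]
  exact Differentiable.fun_sum fun l _ =>
    (entry_differentiable hf i l).mul (entry_differentiable hg l j)

lemma differentiable_prod {ι : Type*} (u : Finset ι) (f : ι → E → ℂ)
    (h : ∀ i, Differentiable ℝ (f i)) : Differentiable ℝ fun t => ∏ i ∈ u, f i t := by
  classical
  induction u using Finset.induction with
  | empty => simpa using differentiable_const (1 : ℂ)
  | @insert a u ha ih =>
    have : (fun t => ∏ i ∈ insert a u, f i t) = fun t => f a t * ∏ i ∈ u, f i t := by
      funext t; rw [Finset.prod_insert ha]
    rw [this]; exact (h a).mul ih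

lemma differentiable_det {f : E → M} (hf : Differentiable ℝ f) :
    Differentiable ℝ fun t => (f t).det := by
  have : (fun t => (f t).det)
      = fun t => ∑ σ : Equiv.Perm (Fin n),
        ((Equiv.Perm.sign σ : ℤ) : ℂ) * ∏ i, f t (σ i) i := by
    funext t; rw [Matrix.det_apply]; simp [Units.smul_def, zsmul_eq_mul]
  rw [this]
  refine Differentiable.fun_sum fun σ _ => ?_
  have hp : Differentiable ℝ fun t => ∏ i, f t (σ i) i :=
    differentiable_prod Finset.univ _ fun i => entry_differentiable hf (σ i) i
  exact hp.const_mul _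

lemma differentiable_inv {f : E → M} (hf : Differentiable ℝ f)
    (hu : ∀ t, IsUnit (f t)) : Differentiable ℝ fun t => (f t)⁻¹ := by
  refine differentiable_of_entries fun i j => ?_
  have : (fun t => (f t)⁻¹ i j)
      = fun t => ((f t).det)⁻¹ * ((f t).updateRow j (Pi.single i 1)).det := by
    funext t
    rw [Matrix.inv_def, Matrix.smul_apply, Matrix.adjugate_apply, smul_eq_mul,
      Ring.inverse_eq_inv]
  rw [this]
  have hdet : ∀ t, (f t).det ≠ 0 := fun t =>
    IsUnit.ne_zero ((Matrix.isUnit_iff_isUnit_det (f t)).mp (hu t))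
  refine Differentiable.mul ((differentiable_det hf).inv hdet) ?_
  refine differentiable_det (differentiable_of_entries fun i' j' => ?_)
  by_cases hij : i' = j
  · have : (fun t => (f t).updateRow j (Pi.single i 1) i' j')
        = fun _ => (Pi.single i 1 : Fin n → ℂ) j' := by
      funext t; rw [Matrix.updateRow_apply, if_pos hij]
    rw [this]; exact differentiable_const _
  · have : (fun t => (f t).updateRow j (Pi.single i 1) i' j')
        = fun t => f t i' j' := by
      funext t; rw [Matrix.updateRow_apply, if_neg hij]
    rw [this]; exact entry_differentiable hf i' j'

/-- There is a nonzero real `s` such that `1 + s • X` is invertible. -/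
lemma exists_unit_perturb (X : M) : ∃ s : ℝ, s ≠ 0 ∧ IsUnit (1 + s • X) := by
  have hdiff : Differentiable ℝ fun s : ℝ => (1 : M) + s • X := by
    refine (differentiable_const_add_iff (𝕜 := ℝ) (1 : M)).mpr ?_
    exact fun s => ((hasDerivAt_id s).smul_const X).differentiableAt
  have hcont : Continuous fun s : ℝ => ((1 : M) + s • X).det :=
    (differentiable_det hdiff).continuous
  have hne : ∀ᶠ s in 𝓝 (0 : ℝ), ((1 : M) + s • X).det ≠ 0 := by
    refine hcont.continuousAt.eventually_ne ?_
    simp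
  have hne' : ∀ᶠ s in 𝓝[≠] (0 : ℝ), ((1 : M) + s • X).det ≠ 0 :=
    hne.filter_mono nhdsWithin_le_nhds
  obtain ⟨s, hsd, hs0⟩ := (hne'.and eventually_mem_nhdsWithin).exists
  exact ⟨s, hs0, (Matrix.isUnit_iff_isUnit_det _).mpr (Ne.isUnit hsd)⟩

/-- If `C` commutes with every invertible perturbation `1 + s • X`, it commutes with `X`. -/
lemma commute_of_perturb {C X : M}
    (hc : ∀ s : ℝ, IsUnit (1 + s • X) → C * (1 + s • X) = (1 + s • X) * C) :
    C * X = X * C := by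
  obtain ⟨s, hs0, hu⟩ := exists_unit_perturb X
  have h := hc s hu
  have h2 : s • (C * X) = s • (X * C) := by
    have := h
    rw [mul_add, add_mul, mul_one, one_mul, mul_smul_comm, smul_mul_assoc] at this
    exact add_left_cancel this
  calc C * X = s⁻¹ • s • (C * X) := (inv_smul_smul₀ hs0 _).symm
    _ = s⁻¹ • s • (X * C) := by rw [h2]
    _ = X * C := inv_smul_smul₀ hs0 _

/-- Conjugation by a unit commuting with `A` fixes `A`. -/
lemma conj_eq_self {g A : M} (hu : IsUnit g) (hcomm : g * A = A * g) :
    g * A * g⁻¹ = A := by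
  have hdet : IsUnit g.det := (Matrix.isUnit_iff_isUnit_det g).mp hu
  rw [hcomm, Matrix.mul_assoc, Matrix.mul_nonsing_inv _ hdet, mul_one]

end Stmt5Aux

namespace Stmt5Aux

lemma mul_inv_cancel_right' {n : ℕ} {g : Matrix (Fin n) (Fin n) ℂ} (hu : IsUnit g)
    (A : Matrix (Fin n) (Fin n) ℂ) : A * g * g⁻¹ = A := by
  rw [Matrix.mul_assoc, Matrix.mul_nonsing_inv _ ((Matrix.isUnit_iff_isUnit_det g).mp hu), mul_one]

lemma inv_mul_cancel_right' {n : ℕ} {g : Matrix (Fin n) (Fin n) ℂ} (hu : IsUnit g)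
    (A : Matrix (Fin n) (Fin n) ℂ) : A * g⁻¹ * g = A := by
  rw [Matrix.mul_assoc, Matrix.nonsing_inv_mul _ ((Matrix.isUnit_iff_isUnit_det g).mp hu), mul_one]

lemma mul_inv_cancel_left' {n : ℕ} {g : Matrix (Fin n) (Fin n) ℂ} (hu : IsUnit g)
    (A : Matrix (Fin n) (Fin n) ℂ) : g * (g⁻¹ * A) = A := by
  rw [← Matrix.mul_assoc, Matrix.mul_nonsing_inv _ ((Matrix.isUnit_iff_isUnit_det g).mp hu),
    one_mul]

lemma inv_mul_cancel_left' {n : ℕ} {g : Matrix (Fin n) (Fin n) ℂ} (hu : IsUnit g)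
    (A : Matrix (Fin n) (Fin n) ℂ) : g⁻¹ * (g * A) = A := by
  rw [← Matrix.mul_assoc, Matrix.nonsing_inv_mul _ ((Matrix.isUnit_iff_isUnit_det g).mp hu),
    one_mul]

end Stmt5Aux


/-- The projection onto `gp` along `gm` for a direct sum decomposition
`M_n(ℂ) = gp ∔ gm` of vector subspaces, viewed as an endomorphism of `M_n(ℂ)`. -/
noncomputable def projOnto {n : ℕ} (gp gm : Submodule ℂ (Matrix (Fin n) (Fin n) ℂ))
    (h : IsCompl gp gm) : Matrix (Fin n) (Fin n) ℂ →ₗ[ℂ] Matrix (Fin n) (Fin n) ℂ :=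
  gp.subtype ∘ₗ Submodule.linearProjOfIsCompl gp gm h

namespace Stmt5Aux

lemma projOnto_eq_of_sub {n : ℕ} (gp gm : Submodule ℂ (Matrix (Fin n) (Fin n) ℂ))
    (h : IsCompl gp gm) {x a b : Matrix (Fin n) (Fin n) ℂ}
    (ha : a ∈ gp) (hb : b ∈ gm) (hx : x = a - b) : projOnto gp gm h x = a := by
  subst hx
  have h1 : projOnto gp gm h a = a := by
    have := congrArg gp.subtype (Submodule.projectionOnto_apply_left h ⟨a, ha⟩)
    exact this
  have h2 : projOnto gp gm h b = 0 := by
    have := congrArg gp.subtype (Submodule.projectionOnto_apply_right h ⟨b, hb⟩)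
    exact this
  rw [map_sub, h1, h2, sub_zero]

end Stmt5Aux


/-- The factorization theorem: if `g±` solve the factorization problem
`exp(−Σ tᵏ F_k(L₀)) = g₊(t)⁻¹ g₋(t)` with `(∂ₖg±)g±⁻¹ ∈ 𝔤±`, then
`L(t) = g₊(t) L₀ g₊(t)⁻¹ = g₋(t) L₀ g₋(t)⁻¹` solves the hierarchy of Lax equations
`∂ₖL = [P₊(F_k(L)), L] = −[P₋(F_k(L)), L]`, and
`∂ₖg₊ = P₊(F_k(L)) g₊`, `∂ₖg₋ = −P₋(F_k(L)) g₋`. -/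
theorem statement5 (n N : ℕ) (hn : 1 ≤ n) (hN : 1 ≤ N)
    (gp gm : Submodule ℂ (Matrix (Fin n) (Fin n) ℂ)) (h : IsCompl gp gm)
    (F : Fin N → Matrix (Fin n) (Fin n) ℂ → Matrix (Fin n) (Fin n) ℂ)
    (hF : ∀ (k : Fin N) (g X : Matrix (Fin n) (Fin n) ℂ), IsUnit g →
      F k (g * X * g⁻¹) = g * F k X * g⁻¹)
    (L₀ : Matrix (Fin n) (Fin n) ℂ)
    (gP gM : (Fin N → ℝ) → Matrix (Fin n) (Fin n) ℂ)
    (hgPd : Differentiable ℝ gP) (hgMd : Differentiable ℝ gM)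
    (hgP0 : gP 0 = 1) (hgM0 : gM 0 = 1)
    (hgPu : ∀ t, IsUnit (gP t)) (hgMu : ∀ t, IsUnit (gM t))
    (hgPtan : ∀ (t : Fin N → ℝ) (k : Fin N),
      fderiv ℝ gP t (Pi.single k 1) * (gP t)⁻¹ ∈ gp)
    (hgMtan : ∀ (t : Fin N → ℝ) (k : Fin N),
      fderiv ℝ gM t (Pi.single k 1) * (gM t)⁻¹ ∈ gm)
    (hfact : ∀ t : Fin N → ℝ,
      NormedSpace.exp (-(∑ k, t k • F k L₀)) = (gP t)⁻¹ * gM t)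
    (L : (Fin N → ℝ) → Matrix (Fin n) (Fin n) ℂ)
    (hL : ∀ t, L t = gP t * L₀ * (gP t)⁻¹) :
    ((∀ t, L t = gM t * L₀ * (gM t)⁻¹) ∧ L 0 = L₀) ∧
    (∀ (t : Fin N → ℝ) (k : Fin N),
      fderiv ℝ L t (Pi.single k 1) = ⁅projOnto gp gm h (F k (L t)), L t⁆ ∧
      fderiv ℝ L t (Pi.single k 1) = -⁅projOnto gm gp h.symm (F k (L t)), L t⁆) ∧
    (∀ (t : Fin N → ℝ) (k : Fin N),
      fderiv ℝ gP t (Pi.single k 1) = projOnto gp gm h (F k (L t)) * gP t ∧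
      fderiv ℝ gM t (Pi.single k 1) = -(projOnto gm gp h.symm (F k (L t)) * gM t)) := by
  classical
  -- commutation properties of conjugation-equivariant maps
  have key : ∀ (k : Fin N) (X : Matrix (Fin n) (Fin n) ℂ),
      X * L₀ = L₀ * X → F k L₀ * X = X * F k L₀ := by
    intro k X hX
    refine Stmt5Aux.commute_of_perturb fun s hu => ?_
    have hcomm : (1 + s • X) * L₀ = L₀ * (1 + s • X) := by
      rw [add_mul, mul_add, one_mul, mul_one, smul_mul_assoc, mul_smul_comm, hX]
    have hconj := Stmt5Aux.conj_eq_self hu hcomm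
    have hiter := hF k (1 + s • X) L₀ hu
    rw [hconj] at hiter
    calc F k L₀ * (1 + s • X)
        = (1 + s • X) * F k L₀ * (1 + s • X)⁻¹ * (1 + s • X) := by rw [← hiter]
      _ = (1 + s • X) * F k L₀ := Stmt5Aux.inv_mul_cancel_right' hu _
  have expkey : ∀ A X : Matrix (Fin n) (Fin n) ℂ, A * X = X * A →
      NormedSpace.exp A * X = X * NormedSpace.exp A := by
    intro A X hAX
    refine Stmt5Aux.commute_of_perturb fun s hu => ?_
    have hcomm : (1 + s • X) * A = A * (1 + s • X) := by
      rw [add_mul, mul_add, one_mul, mul_one, smul_mul_assoc, mul_smul_comm, hAX]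
    have hconj := Stmt5Aux.conj_eq_self hu hcomm
    have hc := Matrix.exp_conj (1 + s • X) A hu
    rw [hconj] at hc
    calc NormedSpace.exp A * (1 + s • X)
        = (1 + s • X) * NormedSpace.exp A * (1 + s • X)⁻¹ * (1 + s • X) := by
          conv_lhs => rw [hc]
      _ = (1 + s • X) * NormedSpace.exp A := Stmt5Aux.inv_mul_cancel_right' hu _
  have commF0 : ∀ k, F k L₀ * L₀ = L₀ * F k L₀ := fun k => key k L₀ rfl
  have commFF : ∀ j k, F j L₀ * F k L₀ = F k L₀ * F j L₀ := fun j k => key j _ (commF0 k)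
  have commSL : ∀ t : Fin N → ℝ, (∑ k, t k • F k L₀) * L₀ = L₀ * ∑ k, t k • F k L₀ := by
    intro t
    rw [Finset.sum_mul, Finset.mul_sum]
    exact Finset.sum_congr rfl fun j _ => by rw [smul_mul_assoc, mul_smul_comm, commF0 j]
  have commSF : ∀ (t : Fin N → ℝ) (k : Fin N),
      (∑ j, t j • F j L₀) * F k L₀ = F k L₀ * ∑ j, t j • F j L₀ := by
    intro t k
    rw [Finset.sum_mul, Finset.mul_sum]
    exact Finset.sum_congr rfl fun j _ => by rw [smul_mul_assoc, mul_smul_comm, commFF j k]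
  have hgMfact : ∀ t, gM t = gP t * NormedSpace.exp (-(∑ k, t k • F k L₀)) := by
    intro t
    rw [hfact t, Stmt5Aux.mul_inv_cancel_left' (hgPu t)]
  -- part (i)
  have hswap : ∀ t : Fin N → ℝ,
      NormedSpace.exp (-(∑ k, t k • F k L₀)) * L₀
        = L₀ * NormedSpace.exp (-(∑ k, t k • F k L₀)) :=
    fun t => expkey _ _ (by rw [neg_mul, mul_neg, commSL t])
  have hcross : ∀ t, L t * gM t = gM t * L₀ := by
    intro t
    rw [hL t]
    calc gP t * L₀ * (gP t)⁻¹ * gM t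
        = gP t * L₀ * ((gP t)⁻¹ * gM t) := by rw [Matrix.mul_assoc]
      _ = gP t * L₀ * NormedSpace.exp (-(∑ k, t k • F k L₀)) := by rw [hfact t]
      _ = gP t * (L₀ * NormedSpace.exp (-(∑ k, t k • F k L₀))) := by rw [Matrix.mul_assoc]
      _ = gP t * (NormedSpace.exp (-(∑ k, t k • F k L₀)) * L₀) := by rw [hswap t]
      _ = gP t * NormedSpace.exp (-(∑ k, t k • F k L₀)) * L₀ := by rw [Matrix.mul_assoc]
      _ = gM t * L₀ := by rw [← hgMfact t]
  have hLM : ∀ t, L t = gM t * L₀ * (gM t)⁻¹ := by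
    intro t
    calc L t = L t * gM t * (gM t)⁻¹ := (Stmt5Aux.mul_inv_cancel_right' (hgMu t) _).symm
      _ = gM t * L₀ * (gM t)⁻¹ := by rw [hcross t]
  have hL0 : L 0 = L₀ := by
    have h1 : (1 : Matrix (Fin n) (Fin n) ℂ)⁻¹ = 1 := by
      have := Matrix.mul_nonsing_inv (1 : Matrix (Fin n) (Fin n) ℂ) (by simp)
      rwa [one_mul] at this
    rw [hL 0, hgP0, h1, one_mul, mul_one]
  -- differentiability of L
  have hLd : Differentiable ℝ L := by
    have : L = fun t => gP t * L₀ * (gP t)⁻¹ := funext hL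
    rw [this]
    exact Stmt5Aux.differentiable_matmul
      (Stmt5Aux.differentiable_matmul hgPd (differentiable_const L₀))
      (Stmt5Aux.differentiable_inv hgPd hgPu)
  -- the main pointwise computation
  have main : ∀ (t : Fin N → ℝ) (k : Fin N),
      fderiv ℝ gP t (Pi.single k 1) = projOnto gp gm h (F k (L t)) * gP t ∧
      fderiv ℝ gM t (Pi.single k 1) = -(projOnto gm gp h.symm (F k (L t)) * gM t) ∧
      fderiv ℝ L t (Pi.single k 1) = ⁅projOnto gp gm h (F k (L t)), L t⁆ ∧
      fderiv ℝ L t (Pi.single k 1) = -⁅projOnto gm gp h.symm (F k (L t)), L t⁆ := by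
    intro t k
    set v : Fin N → ℝ := Pi.single k 1 with hv
    set DP := fderiv ℝ gP t v with hDP
    set DM := fderiv ℝ gM t v with hDM
    set DL := fderiv ℝ L t v with hDL
    set c : ℝ → (Fin N → ℝ) := fun s => t + s • v with hc
    have hc0 : c 0 = t := by simp [hc]
    have hcd : HasDerivAt c v 0 := by
      have h1 : HasDerivAt (fun s : ℝ => s • v) ((1 : ℝ) • v) 0 :=
        (hasDerivAt_id 0).smul_const v
      rw [one_smul] at h1; exact h1.const_add t
    have hline : ∀ (f : (Fin N → ℝ) → Matrix (Fin n) (Fin n) ℂ), Differentiable ℝ f →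
        HasDerivAt (fun s => f (c s)) (fderiv ℝ f t v) 0 := by
      intro f hfd
      have h1 : HasFDerivAt f (fderiv ℝ f t) (c 0) := by
        rw [hc0]; exact (hfd t).hasFDerivAt
      exact h1.comp_hasDerivAt 0 hcd
    have hφP : HasDerivAt (fun s => gP (c s)) DP 0 := hline gP hgPd
    have hφM : HasDerivAt (fun s => gM (c s)) DM 0 := hline gM hgMd
    have hφL : HasDerivAt (fun s => L (c s)) DL 0 := hline L hLd
    have hY : HasDerivAt (fun s : ℝ => NormedSpace.exp (s • (-(F k L₀)))) (-(F k L₀)) 0 :=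
      Stmt5Aux.exp_hasDerivAt _
    have hψ : HasDerivAt (fun s : ℝ => NormedSpace.exp (-(∑ j, t j • F j L₀)) *
        NormedSpace.exp (s • (-(F k L₀))))
        (NormedSpace.exp (-(∑ j, t j • F j L₀)) * -(F k L₀)) 0 := by
      have := Stmt5Aux.hasDerivAt_mul
        (hasDerivAt_const 0 (NormedSpace.exp (-(∑ j, t j • F j L₀)))) hY
      simpa using this
    have hfuneq : (fun s => gM (c s)) = fun s => gP (c s) *
        (NormedSpace.exp (-(∑ j, t j • F j L₀)) * NormedSpace.exp (s • (-(F k L₀)))) := by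
      funext s
      have hterm : ∀ j, c s j • F j L₀ = t j • F j L₀ + (s * v j) • F j L₀ := by
        intro j
        have : c s j = t j + s * v j := by simp [hc]
        rw [this, add_smul]
      have hSc : (∑ j, c s j • F j L₀) = (∑ j, t j • F j L₀) + s • F k L₀ := by
        rw [Finset.sum_congr rfl fun j _ => hterm j, Finset.sum_add_distrib]
        congr 1
        rw [Finset.sum_eq_single k]
        · simp [hv]
        · intro j _ hjk
          simp [hv, Pi.single_eq_of_ne hjk]
        · intro hk; exact absurd (Finset.mem_univ k) hk
      have hcomm2 : Commute (-(∑ j, t j • F j L₀)) (-(s • F k L₀)) := by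
        show _ * _ = _ * _
        rw [neg_mul_neg, neg_mul_neg, mul_smul_comm, smul_mul_assoc, commSF t k]
      rw [hgMfact (c s), hSc, neg_add, Matrix.exp_add_of_commute _ _ hcomm2, smul_neg]
    have hφM' : HasDerivAt (fun s => gM (c s))
        (DP * NormedSpace.exp (-(∑ j, t j • F j L₀)) +
          gP t * (NormedSpace.exp (-(∑ j, t j • F j L₀)) * -(F k L₀))) 0 := by
      rw [hfuneq]
      have := Stmt5Aux.hasDerivAt_mul hφP hψ
      simpa [hc0, NormedSpace.exp_zero] using this
    have hDMeq : DM = DP * NormedSpace.exp (-(∑ j, t j • F j L₀)) +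
        gP t * (NormedSpace.exp (-(∑ j, t j • F j L₀)) * -(F k L₀)) := hφM.unique hφM'
    have hFL : F k (L t) * gM t = gM t * F k L₀ := by
      have h1 : F k (L t) = gM t * F k L₀ * (gM t)⁻¹ := by
        rw [hLM t, hF k (gM t) L₀ (hgMu t)]
      rw [h1, Stmt5Aux.inv_mul_cancel_right' (hgMu t)]
    have hDM2 : DM = (DP * (gP t)⁻¹ - F k (L t)) * gM t := by
      calc DM = DP * ((gP t)⁻¹ * gM t) + gP t * ((gP t)⁻¹ * (gM t * -F k L₀)) := by
            rw [hDMeq, hfact t]; simp only [Matrix.mul_assoc]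
        _ = DP * ((gP t)⁻¹ * gM t) + gM t * -F k L₀ := by
            rw [Stmt5Aux.mul_inv_cancel_left' (hgPu t)]
        _ = DP * ((gP t)⁻¹ * gM t) - F k (L t) * gM t := by
            rw [mul_neg, ← hFL, sub_eq_add_neg]
        _ = (DP * (gP t)⁻¹ - F k (L t)) * gM t := by
            rw [sub_mul, Matrix.mul_assoc]
    have hbval : DM * (gM t)⁻¹ = DP * (gP t)⁻¹ - F k (L t) := by
      rw [hDM2, Stmt5Aux.mul_inv_cancel_right' (hgMu t)]
    have hFab : F k (L t) = DP * (gP t)⁻¹ - DM * (gM t)⁻¹ := by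
      rw [hbval, sub_sub_cancel]
    have projP : projOnto gp gm h (F k (L t)) = DP * (gP t)⁻¹ :=
      Stmt5Aux.projOnto_eq_of_sub gp gm h (hgPtan t k) (hgMtan t k) hFab
    have projM : projOnto gm gp h.symm (F k (L t)) = -(DM * (gM t)⁻¹) := by
      refine Stmt5Aux.projOnto_eq_of_sub gm gp h.symm
        (Submodule.neg_mem _ (hgMtan t k)) (Submodule.neg_mem _ (hgPtan t k)) ?_
      rw [neg_sub_neg]
      exact hFab
    have goalP : DP = projOnto gp gm h (F k (L t)) * gP t := by
      rw [projP, Stmt5Aux.inv_mul_cancel_right' (hgPu t)]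
    have goalM : DM = -(projOnto gm gp h.symm (F k (L t)) * gM t) := by
      rw [projM, neg_mul, neg_neg, Stmt5Aux.inv_mul_cancel_right' (hgMu t)]
    -- the Lax equation
    have hid : (fun s => L (c s) * gP (c s)) = fun s => gP (c s) * L₀ := by
      funext s
      rw [hL (c s), Stmt5Aux.inv_mul_cancel_right' (hgPu (c s))]
    have h1 : HasDerivAt (fun s => L (c s) * gP (c s)) (DL * gP t + L t * DP) 0 := by
      have := Stmt5Aux.hasDerivAt_mul hφL hφP
      simpa [hc0] using this
    have h2 : HasDerivAt (fun s => L (c s) * gP (c s)) (DP * L₀) 0 := by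
      rw [hid]
      have := Stmt5Aux.hasDerivAt_mul hφP (hasDerivAt_const (0:ℝ) L₀)
      simpa [hc0] using this
    have huniq : DL * gP t + L t * DP = DP * L₀ := h1.unique h2
    have ha2 : DP * (gP t)⁻¹ * L t = DP * L₀ * (gP t)⁻¹ := by
      rw [hL t]
      simp only [Matrix.mul_assoc]
      rw [Stmt5Aux.inv_mul_cancel_left' (hgPu t)]
    have hDL3 : DL = DP * (gP t)⁻¹ * L t - L t * (DP * (gP t)⁻¹) := by
      have h3 : DL * gP t = DP * L₀ - L t * DP := eq_sub_of_add_eq huniq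
      calc DL = DL * gP t * (gP t)⁻¹ := (Stmt5Aux.mul_inv_cancel_right' (hgPu t) _).symm
        _ = (DP * L₀ - L t * DP) * (gP t)⁻¹ := by rw [h3]
        _ = DP * L₀ * (gP t)⁻¹ - L t * DP * (gP t)⁻¹ := by rw [sub_mul]
        _ = DP * (gP t)⁻¹ * L t - L t * (DP * (gP t)⁻¹) := by
            rw [← ha2]; simp only [Matrix.mul_assoc]
    have hconjmul : ∀ X Y : Matrix (Fin n) (Fin n) ℂ,
        (gM t * X * (gM t)⁻¹) * (gM t * Y * (gM t)⁻¹) = gM t * (X * Y) * (gM t)⁻¹ := by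
      intro X Y
      simp only [Matrix.mul_assoc]
      rw [Stmt5Aux.inv_mul_cancel_left' (hgMu t)]
    have hcommFL : F k (L t) * L t = L t * F k (L t) := by
      rw [hLM t, hF k (gM t) L₀ (hgMu t), hconjmul, hconjmul, commF0 k]
    have h5 : DP * (gP t)⁻¹ * L t - DM * (gM t)⁻¹ * L t
        = L t * (DP * (gP t)⁻¹) - L t * (DM * (gM t)⁻¹) := by
      rw [← sub_mul, ← mul_sub, ← hFab]
      exact hcommFL
    have bridge : DP * (gP t)⁻¹ * L t - L t * (DP * (gP t)⁻¹)
        = DM * (gM t)⁻¹ * L t - L t * (DM * (gM t)⁻¹) := by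
      calc DP * (gP t)⁻¹ * L t - L t * (DP * (gP t)⁻¹)
          = (DP * (gP t)⁻¹ * L t - DM * (gM t)⁻¹ * L t)
            + (DM * (gM t)⁻¹ * L t - L t * (DP * (gP t)⁻¹)) := by abel
        _ = (L t * (DP * (gP t)⁻¹) - L t * (DM * (gM t)⁻¹))
            + (DM * (gM t)⁻¹ * L t - L t * (DP * (gP t)⁻¹)) := by rw [h5]
        _ = DM * (gM t)⁻¹ * L t - L t * (DM * (gM t)⁻¹) := by abel
    have goalL1 : DL = ⁅projOnto gp gm h (F k (L t)), L t⁆ := by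
      rw [projP, Ring.lie_def]
      exact hDL3
    have goalL2 : DL = -⁅projOnto gm gp h.symm (F k (L t)), L t⁆ := by
      rw [projM, Ring.lie_def, hDL3.trans (bridge)]
      noncomm_ring
    exact ⟨goalP, goalM, goalL1, goalL2⟩
  refine ⟨⟨hLM, hL0⟩, fun t k => ⟨(main t k).2.2.1, (main t k).2.2.2⟩,
    fun t k => ⟨(main t k).1, (main t k).2.1⟩⟩
end

section
/- Under the stated setup, for all k, ℓ ∈ {1,…,K} and all t ∈ ℝᴷ the following off-shell identity holds: ∂_{t^ℓ}L_k(t) − ∂_{t^k}L_ℓ(t) + Σ_{m,n=1}^{2p} Υ_k^m(t) P_{mn}(ξ(φ(t))) Υ_ℓ^n(t) = {H_k, H_ℓ}(ξ(φ(t))). -/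
open Matrix

private lemma clm_sum {n : ℕ} (f : (Fin n → ℝ) →L[ℝ] ℝ) (v : Fin n → ℝ) :
    f v = ∑ i, v i * f (Pi.single i 1) := by
  have h : v = ∑ i, v i • (Pi.single i 1 : Fin n → ℝ) := by
    conv_lhs => rw [← Finset.univ_sum_single v]
    refine Finset.sum_congr rfl fun i _ => ?_
    rw [← Pi.single_smul, smul_eq_mul, mul_one]
  conv_lhs => rw [h, map_sum]
  simp [smul_eq_mul]

private lemma clm_sum' {n m : ℕ} (f : (Fin n → ℝ) →L[ℝ] (Fin m → ℝ)) (v : Fin n → ℝ)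
    (i : Fin m) : f v i = ∑ j, v j * f (Pi.single j 1) i := by
  simpa using clm_sum ((ContinuousLinearMap.proj i).comp f) v

private lemma sum4_swap {A B C D : Type*} [Fintype A] [Fintype B] [Fintype C] [Fintype D]
    (f : A → B → C → D → ℝ) :
    ∑ c, ∑ d, ∑ a, ∑ b, f a b c d = ∑ a, ∑ b, ∑ c, ∑ d, f a b c d :=
  calc ∑ c, ∑ d, ∑ a, ∑ b, f a b c d
      = ∑ c, ∑ a, ∑ d, ∑ b, f a b c d :=
        Finset.sum_congr rfl fun c _ => Finset.sum_comm
    _ = ∑ a, ∑ c, ∑ d, ∑ b, f a b c d := Finset.sum_comm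
    _ = ∑ a, ∑ c, ∑ b, ∑ d, f a b c d :=
        Finset.sum_congr rfl fun a _ => Finset.sum_congr rfl fun c _ => Finset.sum_comm
    _ = ∑ a, ∑ b, ∑ c, ∑ d, f a b c d :=
        Finset.sum_congr rfl fun a _ => Finset.sum_comm

/-- The off-shell identity
`∂_{t^ℓ}L_k − ∂_{t^k}L_ℓ + Σ_{m,n} Υ_k^m P_{mn} Υ_ℓ^n = {H_k, H_ℓ}∘(ξ∘φ)`
relating the coefficients of the Lagrangian one-form, the Euler–Lagrange expressions, the
Poisson tensor and the Poisson bracket of the Hamiltonians. -/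
theorem statement7 (K M p : ℕ) (hK : 1 ≤ K) (hM : 1 ≤ M) (hp : 1 ≤ p)
    (φ : (Fin K → ℝ) → (Fin M → ℝ)) (hφ : ContDiff ℝ 2 φ)
    (π : (Fin M → ℝ) → (Fin M → ℝ)) (hπ : ContDiff ℝ 1 π)
    (ξ : (Fin M → ℝ) → (Fin (2 * p) → ℝ)) (hξ : ContDiff ℝ 1 ξ)
    (H : Fin K → (Fin (2 * p) → ℝ) → ℝ) (hH : ∀ k, ContDiff ℝ 1 (H k))
    (ω P : (Fin (2 * p) → ℝ) → Matrix (Fin (2 * p)) (Fin (2 * p)) ℝ)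
    (hω : Continuous ω) (hP : Continuous P)
    (hanti : ∀ x, (ω x)ᵀ = -ω x)
    (hPω : ∀ x, P x * ω x = 1)
    (hpull : ∀ (y : Fin M → ℝ) (α β : Fin M),
      fderiv ℝ π y (Pi.single β 1) α - fderiv ℝ π y (Pi.single α 1) β
        = ∑ m, ∑ n, fderiv ℝ ξ y (Pi.single α 1) m * ω (ξ y) m n
            * fderiv ℝ ξ y (Pi.single β 1) n)
    (Lag : Fin K → (Fin K → ℝ) → ℝ)
    (hLag : ∀ k t, Lag k t
      = ∑ α, π (φ t) α * fderiv ℝ φ t (Pi.single k 1) α - H k (ξ (φ t)))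
    (Υ : Fin K → Fin (2 * p) → (Fin K → ℝ) → ℝ)
    (hΥ : ∀ k n t, Υ k n t
      = ∑ m, ω (ξ (φ t)) m n * fderiv ℝ (fun s => ξ (φ s)) t (Pi.single k 1) m
        - fderiv ℝ (H k) (ξ (φ t)) (Pi.single n 1))
    (k ℓ : Fin K) (t : Fin K → ℝ) :
    fderiv ℝ (Lag k) t (Pi.single ℓ 1) - fderiv ℝ (Lag ℓ) t (Pi.single k 1)
        + ∑ m, ∑ n, Υ k m t * P (ξ (φ t)) m n * Υ ℓ n t
      = ∑ m, ∑ n, P (ξ (φ t)) m n * fderiv ℝ (H k) (ξ (φ t)) (Pi.single m 1)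
          * fderiv ℝ (H ℓ) (ξ (φ t)) (Pi.single n 1) := by
  classical
  have hφd : Differentiable ℝ φ := hφ.differentiable (by norm_num)
  have hξd : Differentiable ℝ ξ := hξ.differentiable (by norm_num)
  have hπd : Differentiable ℝ π := hπ.differentiable (by norm_num)
  have hHd : ∀ k', Differentiable ℝ (H k') := fun k' => (hH k').differentiable (by norm_num)
  set x := ξ (φ t) with hx
  set Dφ := fderiv ℝ φ t with hDφ
  set Dξ := fderiv ℝ ξ (φ t) with hDξ
  set Dπ := fderiv ℝ π (φ t) with hDπ
  set f2 := fderiv ℝ (fderiv ℝ φ) t with hf2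
  have hφat : HasFDerivAt φ Dφ t := (hφd t).hasFDerivAt
  have hξat : HasFDerivAt ξ Dξ (φ t) := (hξd (φ t)).hasFDerivAt
  have hπat : HasFDerivAt π Dπ (φ t) := (hπd (φ t)).hasFDerivAt
  have hfdφ : ContDiff ℝ 1 (fderiv ℝ φ) := hφ.fderiv_right (by norm_num)
  have hf2at : HasFDerivAt (fderiv ℝ φ) f2 t := (hfdφ.differentiable (by norm_num) t).hasFDerivAt
  have hξφat : HasFDerivAt (fun s => ξ (φ s)) (Dξ.comp Dφ) t := hξat.comp t hφat
  have hχ : fderiv ℝ (fun s => ξ (φ s)) t = Dξ.comp Dφ := hξφat.fderiv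
  have hsymm : ∀ v w, f2 v w = f2 w v := fun v w =>
    (hφ.contDiffAt.isSymmSndFDerivAt (by norm_num)) v w
  -- abbreviations
  set a : Fin (2 * p) → ℝ := fun m => Dξ (Dφ (Pi.single k 1)) m with ha
  set b : Fin (2 * p) → ℝ := fun m => Dξ (Dφ (Pi.single ℓ 1)) m with hb
  set dk : Fin (2 * p) → ℝ := fun n => fderiv ℝ (H k) x (Pi.single n 1) with hdk
  set dl : Fin (2 * p) → ℝ := fun n => fderiv ℝ (H ℓ) x (Pi.single n 1) with hdl
  set S : ℝ := ∑ m, ∑ n, a m * ω x m n * b n with hS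
  -- derivative of the Lagrangian
  have hLagD : ∀ (k' : Fin K), HasFDerivAt (Lag k')
      ((∑ α : Fin M, (π (φ t) α • ((ContinuousLinearMap.proj α).comp
            ((ContinuousLinearMap.apply ℝ (Fin M → ℝ)
              ((Pi.single k' 1 : Fin K → ℝ))).comp f2))
          + Dφ (Pi.single k' 1) α • ((ContinuousLinearMap.proj α).comp (Dπ.comp Dφ))))
        - (fderiv ℝ (H k') x).comp (Dξ.comp Dφ)) t := by
    intro k'
    have hL : Lag k' = fun s =>
        (∑ α, π (φ s) α * fderiv ℝ φ s (Pi.single k' 1) α) - H k' (ξ (φ s)) :=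
      funext (hLag k')
    rw [hL]
    refine HasFDerivAt.sub (HasFDerivAt.fun_sum ?_) (((hHd k' x).hasFDerivAt).comp t hξφat)
    intro α _
    have h1 : HasFDerivAt (fun s => π (φ s) α)
        (((ContinuousLinearMap.proj α : (Fin M → ℝ) →L[ℝ] ℝ)).comp (Dπ.comp Dφ)) t :=
      ((ContinuousLinearMap.proj α : (Fin M → ℝ) →L[ℝ] ℝ).hasFDerivAt).comp t
        (hπat.comp t hφat)
    have hev : HasFDerivAt (fun s => fderiv ℝ φ s (Pi.single k' 1))
        ((ContinuousLinearMap.apply ℝ (Fin M → ℝ)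
          ((Pi.single k' 1 : Fin K → ℝ))).comp f2) t :=
      (ContinuousLinearMap.apply ℝ (Fin M → ℝ)
        ((Pi.single k' 1 : Fin K → ℝ))).hasFDerivAt.comp t hf2at
    have h2 : HasFDerivAt (fun s => fderiv ℝ φ s (Pi.single k' 1) α)
        ((ContinuousLinearMap.proj α).comp
          ((ContinuousLinearMap.apply ℝ (Fin M → ℝ) (Pi.single k' 1)).comp f2)) t :=
      ((ContinuousLinearMap.proj α : (Fin M → ℝ) →L[ℝ] ℝ).hasFDerivAt).comp t hev
    exact h1.mul h2
  have hLval : ∀ (k' : Fin K) (v : Fin K → ℝ),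
      fderiv ℝ (Lag k') t v
        = (∑ α, (π (φ t) α * f2 v (Pi.single k' 1) α
            + Dφ (Pi.single k' 1) α * Dπ (Dφ v) α))
          - fderiv ℝ (H k') x (Dξ (Dφ v)) := by
    intro k' v
    rw [(hLagD k').fderiv]
    simp [smul_eq_mul]
  -- the Euler-Lagrange expressions
  have hΥk : ∀ n, Υ k n t = (∑ m, ω x m n * a m) - dk n := by
    intro n; rw [hΥ, hχ]; simp [← hx, ha, hdk]
  have hΥl : ∀ n, Υ ℓ n t = (∑ m, ω x m n * b m) - dl n := by
    intro n; rw [hΥ, hχ]; simp [← hx, hb, hdl]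
  -- antisymmetry pointwise
  have hA : ∀ m n, ω x m n = -ω x n m := by
    intro m n
    have := congrFun (congrFun (hanti x) n) m
    simpa [Matrix.transpose_apply] using this
  have hωP : ω x * P x = 1 := mul_eq_one_comm.mp (hPω x)
  -- pullback at φ t
  have hpull' : ∀ α β : Fin M, Dπ (Pi.single β 1) α - Dπ (Pi.single α 1) β
      = ∑ m, ∑ n, Dξ (Pi.single α 1) m * ω x m n * Dξ (Pi.single β 1) n := by
    intro α β
    simpa [← hDπ, ← hDξ, ← hx] using hpull (φ t) α β
  -- Claim 1: the derivative difference
  have hHk : fderiv ℝ (H k) x (Dξ (Dφ (Pi.single ℓ 1))) = ∑ n, b n * dk n :=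
    clm_sum (fderiv ℝ (H k) x) (Dξ (Dφ (Pi.single ℓ 1)))
  have hHl : fderiv ℝ (H ℓ) x (Dξ (Dφ (Pi.single k 1))) = ∑ n, a n * dl n :=
    clm_sum (fderiv ℝ (H ℓ) x) (Dξ (Dφ (Pi.single k 1)))
  have key : (∑ α, Dφ (Pi.single k 1) α * Dπ (Dφ (Pi.single ℓ 1)) α)
      - (∑ α, Dφ (Pi.single ℓ 1) α * Dπ (Dφ (Pi.single k 1)) α) = S := by
    have eDπ : ∀ (v : Fin K → ℝ) (α : Fin M),
        Dπ (Dφ v) α = ∑ β, Dφ v β * Dπ (Pi.single β 1) α :=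
      fun v α => clm_sum' Dπ (Dφ v) α
    have eDξ : ∀ (v : Fin K → ℝ) (m : Fin (2 * p)),
        Dξ (Dφ v) m = ∑ α, Dφ v α * Dξ (Pi.single α 1) m :=
      fun v m => clm_sum' Dξ (Dφ v) m
    calc (∑ α, Dφ (Pi.single k 1) α * Dπ (Dφ (Pi.single ℓ 1)) α)
          - (∑ α, Dφ (Pi.single ℓ 1) α * Dπ (Dφ (Pi.single k 1)) α)
        = (∑ α, ∑ β, Dφ (Pi.single k 1) α * Dφ (Pi.single ℓ 1) β * Dπ (Pi.single β 1) α)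
          - (∑ α, ∑ β, Dφ (Pi.single ℓ 1) α * Dφ (Pi.single k 1) β
              * Dπ (Pi.single β 1) α) := by
          simp only [eDπ, Finset.mul_sum]
          congr 1 <;> exact Finset.sum_congr rfl fun α _ =>
            Finset.sum_congr rfl fun β _ => by ring
      _ = ∑ α, ∑ β, Dφ (Pi.single k 1) α * Dφ (Pi.single ℓ 1) β
            * (Dπ (Pi.single β 1) α - Dπ (Pi.single α 1) β) := by
          rw [Finset.sum_comm (f := fun α β => Dφ (Pi.single ℓ 1) α * Dφ (Pi.single k 1) β
            * Dπ (Pi.single β 1) α), ← Finset.sum_sub_distrib]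
          refine Finset.sum_congr rfl fun α _ => ?_
          rw [← Finset.sum_sub_distrib]
          exact Finset.sum_congr rfl fun β _ => by ring
      _ = ∑ α, ∑ β, Dφ (Pi.single k 1) α * Dφ (Pi.single ℓ 1) β
            * (∑ m, ∑ n, Dξ (Pi.single α 1) m * ω x m n * Dξ (Pi.single β 1) n) := by
          simp only [hpull']
      _ = S := by
          rw [hS]
          simp only [ha, hb, eDξ, Finset.sum_mul, Finset.mul_sum]
          conv_rhs => rw [sum4_swap, Finset.sum_comm]
          refine Finset.sum_congr rfl fun α _ => Finset.sum_congr rfl fun β _ => ?_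
          refine Finset.sum_congr rfl fun m _ => Finset.sum_congr rfl fun n _ => by ring
  have h1 : fderiv ℝ (Lag k) t (Pi.single ℓ 1) - fderiv ℝ (Lag ℓ) t (Pi.single k 1)
      = S - (∑ n, b n * dk n) + (∑ n, a n * dl n) := by
    rw [hLval k (Pi.single ℓ 1), hLval ℓ (Pi.single k 1), Finset.sum_add_distrib,
      Finset.sum_add_distrib]
    have e0 : (∑ α, π (φ t) α * f2 (Pi.single ℓ 1) (Pi.single k 1) α)
        = ∑ α, π (φ t) α * f2 (Pi.single k 1) (Pi.single ℓ 1) α :=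
      Finset.sum_congr rfl fun α _ => by rw [hsymm]
    rw [e0, hHk, hHl]
    linarith [key]
  -- Claim 2: the Poisson-tensor term
  have e1 : ∀ (v : Fin (2 * p) → ℝ) (n : Fin (2 * p)),
      (∑ m, (∑ r, ω x r m * v r) * P x m n) = v n := by
    intro v n
    calc ∑ m, (∑ r, ω x r m * v r) * P x m n
        = ∑ m, ∑ r, v r * (ω x r m * P x m n) := by
          refine Finset.sum_congr rfl fun m _ => ?_
          rw [Finset.sum_mul]
          exact Finset.sum_congr rfl fun r _ => by ring
      _ = ∑ r, v r * ∑ m, ω x r m * P x m n := by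
          rw [Finset.sum_comm]
          exact Finset.sum_congr rfl fun r _ => by rw [Finset.mul_sum]
      _ = ∑ r, v r * (ω x * P x) r n := by
          simp only [Matrix.mul_apply]
      _ = v n := by
          rw [hωP]
          simp [Matrix.one_apply]
  have e2 : ∀ (v : Fin (2 * p) → ℝ) (m : Fin (2 * p)),
      (∑ n, P x m n * (∑ s, ω x s n * v s)) = -v m := by
    intro v m
    calc ∑ n, P x m n * ∑ s, ω x s n * v s
        = ∑ n, ∑ s, v s * -(P x m n * ω x n s) := by
          refine Finset.sum_congr rfl fun n _ => ?_
          rw [Finset.mul_sum]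
          refine Finset.sum_congr rfl fun s _ => ?_
          rw [hA s n]; ring
      _ = ∑ s, v s * -(∑ n, P x m n * ω x n s) := by
          rw [Finset.sum_comm]
          refine Finset.sum_congr rfl fun s _ => ?_
          simp [Finset.mul_sum, mul_neg, Finset.sum_neg_distrib]
      _ = ∑ s, v s * -(P x * ω x) m s := by
          simp only [Matrix.mul_apply]
      _ = -v m := by
          rw [hPω x]
          simp [Matrix.one_apply]
  have hT1 : ∑ m, ∑ n, (∑ r, ω x r m * a r) * P x m n * (∑ s, ω x s n * b s) = -S := by
    calc ∑ m, ∑ n, (∑ r, ω x r m * a r) * P x m n * (∑ s, ω x s n * b s)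
        = ∑ n, (∑ m, (∑ r, ω x r m * a r) * P x m n) * (∑ s, ω x s n * b s) := by
          rw [Finset.sum_comm]
          exact Finset.sum_congr rfl fun n _ => (Finset.sum_mul _ _ _).symm
      _ = ∑ n, a n * (∑ s, ω x s n * b s) := by
          refine Finset.sum_congr rfl fun n _ => ?_
          rw [e1 a n]
      _ = ∑ n, ∑ s, a n * ω x s n * b s := by
          refine Finset.sum_congr rfl fun n _ => ?_
          rw [Finset.mul_sum]
          exact Finset.sum_congr rfl fun s _ => by ring
      _ = -S := by
          have hpt : ∀ (n s : Fin (2 * p)), a n * ω x s n * b s = -(a n * ω x n s * b s) :=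
            fun n s => by rw [hA s n]; ring
          simp only [hpt, Finset.sum_neg_distrib, hS]
  have hT2 : ∑ m, ∑ n, (∑ r, ω x r m * a r) * P x m n * dl n = ∑ n, a n * dl n := by
    calc ∑ m, ∑ n, (∑ r, ω x r m * a r) * P x m n * dl n
        = ∑ n, (∑ m, (∑ r, ω x r m * a r) * P x m n) * dl n := by
          rw [Finset.sum_comm]
          exact Finset.sum_congr rfl fun n _ => (Finset.sum_mul _ _ _).symm
      _ = ∑ n, a n * dl n := by
          refine Finset.sum_congr rfl fun n _ => ?_
          rw [e1 a n]
  have hT3 : ∑ m, ∑ n, dk m * P x m n * (∑ s, ω x s n * b s) = -∑ n, b n * dk n := by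
    calc ∑ m, ∑ n, dk m * P x m n * (∑ s, ω x s n * b s)
        = ∑ m, dk m * ∑ n, P x m n * (∑ s, ω x s n * b s) := by
          refine Finset.sum_congr rfl fun m _ => ?_
          rw [Finset.mul_sum]
          exact Finset.sum_congr rfl fun n _ => by ring
      _ = ∑ m, dk m * -b m := by
          refine Finset.sum_congr rfl fun m _ => ?_
          rw [e2 b m]
      _ = -∑ n, b n * dk n := by
          rw [← Finset.sum_neg_distrib]
          exact Finset.sum_congr rfl fun m _ => by ring
  have h2 : ∑ m, ∑ n, Υ k m t * P x m n * Υ ℓ n t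
      = -S - (∑ n, a n * dl n) + (∑ n, b n * dk n)
        + ∑ m, ∑ n, P x m n * dk m * dl n := by
    calc ∑ m, ∑ n, Υ k m t * P x m n * Υ ℓ n t
        = ∑ m, ∑ n, ((∑ r, ω x r m * a r) * P x m n * (∑ s, ω x s n * b s)
            - (∑ r, ω x r m * a r) * P x m n * dl n
            - dk m * P x m n * (∑ s, ω x s n * b s)
            + P x m n * dk m * dl n) := by
          refine Finset.sum_congr rfl fun m _ => Finset.sum_congr rfl fun n _ => ?_
          rw [hΥk m, hΥl n]; ring
      _ = (∑ m, ∑ n, (∑ r, ω x r m * a r) * P x m n * (∑ s, ω x s n * b s))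
            - (∑ m, ∑ n, (∑ r, ω x r m * a r) * P x m n * dl n)
            - (∑ m, ∑ n, dk m * P x m n * (∑ s, ω x s n * b s))
            + ∑ m, ∑ n, P x m n * dk m * dl n := by
          simp only [Finset.sum_add_distrib, Finset.sum_sub_distrib]
      _ = -S - (∑ n, a n * dl n) + (∑ n, b n * dk n)
            + ∑ m, ∑ n, P x m n * dk m * dl n := by
          rw [hT1, hT2, hT3]; ring
  rw [h1, h2]
  have : ∀ m n, P x m n * fderiv ℝ (H k) x (Pi.single m 1)
      * fderiv ℝ (H ℓ) x (Pi.single n 1) = P x m n * dk m * dl n := by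
    intro m n; rw [hdk, hdl]
  simp only [this]
  ring
end

section
/- Under the stated setup, suppose in addition that φ satisfies the multitime Hamiltonian (Euler–Lagrange) equations Υ_k^n(t) = 0 for all k ∈ {1,…,K}, n ∈ {1,…,2p} and t ∈ ℝᴷ. Then ∂_{t^ℓ}L_k(t) − ∂_{t^k}L_ℓ(t) = {H_k, H_ℓ}(ξ(φ(t))) for all k, ℓ and t; in particular, the closure relation ∂_{t^ℓ}L_k = ∂_{t^k}L_ℓ holds identically along φ if and only if the Hamiltonians are in involution along the solution, i.e. {H_k, H_ℓ}(ξ(φ(t))) = 0 for all k, ℓ and t. -/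
open Matrix

theorem clm_pi_expand {N : ℕ} {E : Type*} [NormedAddCommGroup E] [NormedSpace ℝ E]
    (L : (Fin N → ℝ) →L[ℝ] E) (w : Fin N → ℝ) :
    L w = ∑ i, w i • L (Pi.single i 1) := by
  conv_lhs => rw [← Finset.univ_sum_single w]
  rw [map_sum]
  refine Finset.sum_congr rfl fun i _ => ?_
  have h : (Pi.single i (w i) : Fin N → ℝ) = w i • (Pi.single i 1 : Fin N → ℝ) := by
    rw [← Pi.single_smul, smul_eq_mul, mul_one]
  rw [h, L.map_smul]

theorem sum4_comm {A B : Type*} [Fintype A] [Fintype B] (f : A → A → B → B → ℝ) :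
    ∑ α, ∑ β, ∑ m, ∑ n, f α β m n = ∑ m, ∑ n, ∑ α, ∑ β, f α β m n := by
  calc ∑ α, ∑ β, ∑ m, ∑ n, f α β m n
      = ∑ α, ∑ m, ∑ β, ∑ n, f α β m n :=
        Finset.sum_congr rfl fun α _ => Finset.sum_comm
    _ = ∑ m, ∑ α, ∑ β, ∑ n, f α β m n := Finset.sum_comm
    _ = ∑ m, ∑ α, ∑ n, ∑ β, f α β m n :=
        Finset.sum_congr rfl fun m _ => Finset.sum_congr rfl fun α _ => Finset.sum_comm
    _ = ∑ m, ∑ n, ∑ α, ∑ β, f α β m n :=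
        Finset.sum_congr rfl fun m _ => Finset.sum_comm

theorem sum_algebra (N : ℕ) (W Q : Matrix (Fin N) (Fin N) ℝ) (a b hk hl : Fin N → ℝ)
    (hWQ : W * Q = 1)
    (hhk : ∀ n, hk n = ∑ m, W m n * a m) (hhl : ∀ n, hl n = ∑ m, W m n * b m) :
    (∑ m, ∑ n, W m n * a m * b n) - (∑ n, b n * hk n) + (∑ n, a n * hl n)
      = ∑ m, ∑ n, Q m n * hk m * hl n := by
  have hinv : ∀ i r, (∑ j, W i j * Q j r) = if i = r then 1 else 0 := by
    intro i r
    have := congrFun (congrFun hWQ i) r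
    simpa [Matrix.mul_apply, Matrix.one_apply] using this
  have h1 : (∑ n, b n * hk n) = ∑ m, ∑ n, W m n * a m * b n := by
    rw [Finset.sum_comm]
    refine Finset.sum_congr rfl fun n _ => ?_
    rw [hhk n, Finset.mul_sum]
    exact Finset.sum_congr rfl fun m _ => by ring
  have h3 : (∑ m, ∑ n, Q m n * hk m * hl n) = ∑ n, a n * hl n := by
    rw [Finset.sum_comm]
    refine Finset.sum_congr rfl fun n _ => ?_
    have key : (∑ m, Q m n * hk m) = a n := by
      calc ∑ m, Q m n * hk m = ∑ m, ∑ i, W i m * a i * Q m n := by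
            refine Finset.sum_congr rfl fun m _ => ?_
            rw [hhk m, Finset.mul_sum]
            exact Finset.sum_congr rfl fun i _ => by ring
        _ = ∑ i, ∑ m, W i m * a i * Q m n := Finset.sum_comm
        _ = ∑ i, a i * (∑ m, W i m * Q m n) := by
            refine Finset.sum_congr rfl fun i _ => ?_
            rw [Finset.mul_sum]
            exact Finset.sum_congr rfl fun m _ => by ring
        _ = ∑ i, a i * (if i = n then 1 else 0) :=
            Finset.sum_congr rfl fun i _ => by rw [hinv i n]
        _ = a n := by simp
    calc ∑ m, Q m n * hk m * hl n = (∑ m, Q m n * hk m) * hl n := by rw [Finset.sum_mul]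
      _ = a n * hl n := by rw [key]
  rw [h1, h3]; ring

theorem T_eq (M N : ℕ) (u w : Fin M → ℝ) (Pd : Fin M → Fin M → ℝ)
    (Xi : Fin M → Fin N → ℝ) (W : Matrix (Fin N) (Fin N) ℝ)
    (hpull : ∀ α β, Pd β α - Pd α β = ∑ m, ∑ n, Xi α m * W m n * Xi β n) :
    (∑ α, (∑ β, w β * Pd β α) * u α) - (∑ α, (∑ β, u β * Pd β α) * w α)
      = ∑ m, ∑ n, W m n * (∑ α, u α * Xi α m) * (∑ β, w β * Xi β n) := by
  have s1 : (∑ α, (∑ β, w β * Pd β α) * u α) = ∑ α, ∑ β, u α * w β * Pd β α := by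
    refine Finset.sum_congr rfl fun α _ => ?_
    rw [Finset.sum_mul]
    exact Finset.sum_congr rfl fun β _ => by ring
  have s2 : (∑ α, (∑ β, u β * Pd β α) * w α) = ∑ α, ∑ β, u α * w β * Pd α β := by
    calc (∑ α, (∑ β, u β * Pd β α) * w α)
        = ∑ α, ∑ β, u β * Pd β α * w α := by
          refine Finset.sum_congr rfl fun α _ => by rw [Finset.sum_mul]
      _ = ∑ β, ∑ α, u β * Pd β α * w α := Finset.sum_comm
      _ = ∑ α, ∑ β, u α * w β * Pd α β :=
          Finset.sum_congr rfl fun α _ => Finset.sum_congr rfl fun β _ => by ring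
  rw [s1, s2, ← Finset.sum_sub_distrib]
  have s3 : ∀ α : Fin M, (∑ β, u α * w β * Pd β α) - (∑ β, u α * w β * Pd α β)
      = ∑ β, ∑ m, ∑ n, u α * w β * (Xi α m * W m n * Xi β n) := by
    intro α
    rw [← Finset.sum_sub_distrib]
    refine Finset.sum_congr rfl fun β _ => ?_
    calc u α * w β * Pd β α - u α * w β * Pd α β
        = u α * w β * (Pd β α - Pd α β) := by ring
      _ = u α * w β * ∑ m, ∑ n, Xi α m * W m n * Xi β n := by rw [hpull α β]
      _ = ∑ m, ∑ n, u α * w β * (Xi α m * W m n * Xi β n) := by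
          rw [Finset.mul_sum]
          exact Finset.sum_congr rfl fun m _ => by rw [Finset.mul_sum]
  calc ∑ α, ((∑ β, u α * w β * Pd β α) - ∑ β, u α * w β * Pd α β)
      = ∑ α, ∑ β, ∑ m, ∑ n, u α * w β * (Xi α m * W m n * Xi β n) :=
        Finset.sum_congr rfl fun α _ => s3 α
    _ = ∑ m, ∑ n, ∑ α, ∑ β, u α * w β * (Xi α m * W m n * Xi β n) := sum4_comm _
    _ = ∑ m, ∑ n, W m n * (∑ α, u α * Xi α m) * (∑ β, w β * Xi β n) := by
        refine Finset.sum_congr rfl fun m _ => Finset.sum_congr rfl fun n _ => ?_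
        rw [mul_assoc, Finset.sum_mul_sum, Finset.mul_sum]
        refine Finset.sum_congr rfl fun α _ => ?_
        rw [Finset.mul_sum]
        exact Finset.sum_congr rfl fun β _ => by ring

theorem dLag (K M N : ℕ) (φ : (Fin K → ℝ) → Fin M → ℝ) (hφ : ContDiff ℝ 2 φ)
    (π : (Fin M → ℝ) → Fin M → ℝ) (hπ : ContDiff ℝ 1 π)
    (ξ : (Fin M → ℝ) → Fin N → ℝ) (hξ : ContDiff ℝ 1 ξ)
    (Hk : (Fin N → ℝ) → ℝ) (hHk : ContDiff ℝ 1 Hk)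
    (Lk : (Fin K → ℝ) → ℝ) (uk : Fin K → ℝ)
    (hLk : ∀ s, Lk s = ∑ α, π (φ s) α * fderiv ℝ φ s uk α - Hk (ξ (φ s)))
    (t v : Fin K → ℝ) :
    fderiv ℝ Lk t v
      = (∑ α, (fderiv ℝ π (φ t) (fderiv ℝ φ t v) α * fderiv ℝ φ t uk α
          + π (φ t) α * fderiv ℝ (fderiv ℝ φ) t v uk α))
        - fderiv ℝ Hk (ξ (φ t)) (fderiv ℝ (fun s => ξ (φ s)) t v) := by
  have hφd : ∀ s, DifferentiableAt ℝ φ s := fun s => (hφ.differentiable (by norm_num)) s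
  have hdC : ContDiff ℝ 1 (fderiv ℝ φ) := hφ.fderiv_right (by norm_num)
  have hdd : DifferentiableAt ℝ (fderiv ℝ φ) t := hdC.differentiable (by norm_num) t
  have hπd : DifferentiableAt ℝ π (φ t) := hπ.differentiable (by norm_num) _
  have hξd : DifferentiableAt ℝ ξ (φ t) := hξ.differentiable (by norm_num) _
  have hHd : DifferentiableAt ℝ Hk (ξ (φ t)) := hHk.differentiable (by norm_num) _
  have hgt : HasFDerivAt (fun s => ξ (φ s))
      ((fderiv ℝ ξ (φ t)).comp (fderiv ℝ φ t)) t := by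
    simpa [Function.comp_def] using hξd.hasFDerivAt.comp t (hφd t).hasFDerivAt
  have hgfd : fderiv ℝ (fun s => ξ (φ s)) t
      = (fderiv ℝ ξ (φ t)).comp (fderiv ℝ φ t) := hgt.fderiv
  have hHcomp : HasFDerivAt (fun s => Hk (ξ (φ s)))
      ((fderiv ℝ Hk (ξ (φ t))).comp ((fderiv ℝ ξ (φ t)).comp (fderiv ℝ φ t))) t := by
    simpa [Function.comp_def] using hHd.hasFDerivAt.comp t hgt
  have hπφ : HasFDerivAt (fun s => π (φ s))
      ((fderiv ℝ π (φ t)).comp (fderiv ℝ φ t)) t := by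
    simpa [Function.comp_def] using hπd.hasFDerivAt.comp t (hφd t).hasFDerivAt
  have hπφα : ∀ α : Fin M, HasFDerivAt (fun s => π (φ s) α)
      ((ContinuousLinearMap.proj α).comp ((fderiv ℝ π (φ t)).comp (fderiv ℝ φ t))) t := by
    intro α
    simpa [Function.comp_def]
      using (ContinuousLinearMap.hasFDerivAt (ContinuousLinearMap.proj α)).comp t hπφ
  have hF2 : DifferentiableAt ℝ (fun s => fderiv ℝ φ s uk) t :=
    hdd.clm_apply (differentiableAt_const uk)
  have hF2fd : fderiv ℝ (fun s => fderiv ℝ φ s uk) t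
      = (fderiv ℝ (fderiv ℝ φ) t).flip uk := by
    rw [fderiv_clm_apply hdd (differentiableAt_const uk)]
    simp
  have hF2α : ∀ α : Fin M, HasFDerivAt (fun s => fderiv ℝ φ s uk α)
      ((ContinuousLinearMap.proj α).comp ((fderiv ℝ (fderiv ℝ φ) t).flip uk)) t := by
    intro α
    have h := (ContinuousLinearMap.hasFDerivAt
      (ContinuousLinearMap.proj (R := ℝ) (φ := fun _ : Fin M => ℝ) α)).comp t
      (hF2fd ▸ hF2.hasFDerivAt)
    simpa [Function.comp_def] using h
  have hLfun : Lk = fun s =>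
      (∑ α, π (φ s) α * fderiv ℝ φ s uk α) - Hk (ξ (φ s)) := funext hLk
  have hsum : HasFDerivAt (fun s => ∑ α, π (φ s) α * fderiv ℝ φ s uk α)
      (∑ α, (π (φ t) α • ((ContinuousLinearMap.proj α).comp
            ((fderiv ℝ (fderiv ℝ φ) t).flip uk))
          + fderiv ℝ φ t uk α • ((ContinuousLinearMap.proj α).comp
            ((fderiv ℝ π (φ t)).comp (fderiv ℝ φ t))))) t := by
    refine HasFDerivAt.fun_sum fun α _ => ?_
    exact (hπφα α).mul (hF2α α)
  have hmain : HasFDerivAt Lk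
      ((∑ α, (π (φ t) α • ((ContinuousLinearMap.proj α).comp
            ((fderiv ℝ (fderiv ℝ φ) t).flip uk))
          + fderiv ℝ φ t uk α • ((ContinuousLinearMap.proj α).comp
            ((fderiv ℝ π (φ t)).comp (fderiv ℝ φ t)))))
        - (fderiv ℝ Hk (ξ (φ t))).comp ((fderiv ℝ ξ (φ t)).comp (fderiv ℝ φ t))) t := by
    rw [hLfun]
    exact hsum.sub hHcomp
  rw [hmain.fderiv, hgfd]
  simp only [ContinuousLinearMap.sub_apply, ContinuousLinearMap.sum_apply,
    ContinuousLinearMap.add_apply, ContinuousLinearMap.smul_apply,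
    ContinuousLinearMap.comp_apply, ContinuousLinearMap.proj_apply,
    ContinuousLinearMap.flip_apply, smul_eq_mul]
  congr 1
  exact Finset.sum_congr rfl fun α _ => by ring

/-- On solutions of the multitime Euler–Lagrange equations `Υ_k^n = 0`, one has
`∂_{t^ℓ}L_k − ∂_{t^k}L_ℓ = {H_k, H_ℓ}∘(ξ∘φ)`; in particular, the closure relation holds
identically along `φ` if and only if the Hamiltonians are in involution along the
solution. -/
theorem statement8 (K M p : ℕ) (hK : 1 ≤ K) (hM : 1 ≤ M) (hp : 1 ≤ p)
    (φ : (Fin K → ℝ) → (Fin M → ℝ)) (hφ : ContDiff ℝ 2 φ)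
    (π : (Fin M → ℝ) → (Fin M → ℝ)) (hπ : ContDiff ℝ 1 π)
    (ξ : (Fin M → ℝ) → (Fin (2 * p) → ℝ)) (hξ : ContDiff ℝ 1 ξ)
    (H : Fin K → (Fin (2 * p) → ℝ) → ℝ) (hH : ∀ k, ContDiff ℝ 1 (H k))
    (ω P : (Fin (2 * p) → ℝ) → Matrix (Fin (2 * p)) (Fin (2 * p)) ℝ)
    (hω : Continuous ω) (hP : Continuous P)
    (hanti : ∀ x, (ω x)ᵀ = -ω x)
    (hPω : ∀ x, P x * ω x = 1)
    (hpull : ∀ (y : Fin M → ℝ) (α β : Fin M),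
      fderiv ℝ π y (Pi.single β 1) α - fderiv ℝ π y (Pi.single α 1) β
        = ∑ m, ∑ n, fderiv ℝ ξ y (Pi.single α 1) m * ω (ξ y) m n
            * fderiv ℝ ξ y (Pi.single β 1) n)
    (Lag : Fin K → (Fin K → ℝ) → ℝ)
    (hLag : ∀ k t, Lag k t
      = ∑ α, π (φ t) α * fderiv ℝ φ t (Pi.single k 1) α - H k (ξ (φ t)))
    (Υ : Fin K → Fin (2 * p) → (Fin K → ℝ) → ℝ)
    (hΥ : ∀ k n t, Υ k n t
      = ∑ m, ω (ξ (φ t)) m n * fderiv ℝ (fun s => ξ (φ s)) t (Pi.single k 1) m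
        - fderiv ℝ (H k) (ξ (φ t)) (Pi.single n 1))
    (hEL : ∀ k n t, Υ k n t = 0) :
    (∀ (k ℓ : Fin K) (t : Fin K → ℝ),
      fderiv ℝ (Lag k) t (Pi.single ℓ 1) - fderiv ℝ (Lag ℓ) t (Pi.single k 1)
        = ∑ m, ∑ n, P (ξ (φ t)) m n * fderiv ℝ (H k) (ξ (φ t)) (Pi.single m 1)
            * fderiv ℝ (H ℓ) (ξ (φ t)) (Pi.single n 1)) ∧
    ((∀ (k ℓ : Fin K) (t : Fin K → ℝ),
        fderiv ℝ (Lag k) t (Pi.single ℓ 1) = fderiv ℝ (Lag ℓ) t (Pi.single k 1)) ↔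
      (∀ (k ℓ : Fin K) (t : Fin K → ℝ),
        ∑ m, ∑ n, P (ξ (φ t)) m n * fderiv ℝ (H k) (ξ (φ t)) (Pi.single m 1)
            * fderiv ℝ (H ℓ) (ξ (φ t)) (Pi.single n 1) = 0)) := by
  have main : ∀ (k ℓ : Fin K) (t : Fin K → ℝ),
      fderiv ℝ (Lag k) t (Pi.single ℓ 1) - fderiv ℝ (Lag ℓ) t (Pi.single k 1)
        = ∑ m, ∑ n, P (ξ (φ t)) m n * fderiv ℝ (H k) (ξ (φ t)) (Pi.single m 1)
            * fderiv ℝ (H ℓ) (ξ (φ t)) (Pi.single n 1) := by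
    intro k ℓ t
    have hφd : DifferentiableAt ℝ φ t := hφ.differentiable (by norm_num) t
    have hξd : DifferentiableAt ℝ ξ (φ t) := hξ.differentiable (by norm_num) _
    have hgt : HasFDerivAt (fun s => ξ (φ s))
        ((fderiv ℝ ξ (φ t)).comp (fderiv ℝ φ t)) t := by
      simpa [Function.comp_def] using hξd.hasFDerivAt.comp t hφd.hasFDerivAt
    have hgfd : fderiv ℝ (fun s => ξ (φ s)) t
        = (fderiv ℝ ξ (φ t)).comp (fderiv ℝ φ t) := hgt.fderiv
    -- component expansions of continuous linear maps
    have hDπ : ∀ (z : Fin M → ℝ) (α : Fin M), fderiv ℝ π (φ t) z α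
        = ∑ β, z β * fderiv ℝ π (φ t) (Pi.single β 1) α := by
      intro z α
      have h := congrFun (clm_pi_expand (fderiv ℝ π (φ t)) z) α
      simpa [Finset.sum_apply, Pi.smul_apply, smul_eq_mul] using h
    have hXi : ∀ (z : Fin M → ℝ) (m : Fin (2 * p)), fderiv ℝ ξ (φ t) z m
        = ∑ α, z α * fderiv ℝ ξ (φ t) (Pi.single α 1) m := by
      intro z m
      have h := congrFun (clm_pi_expand (fderiv ℝ ξ (φ t)) z) m
      simpa [Finset.sum_apply, Pi.smul_apply, smul_eq_mul] using h
    have hHexp : ∀ (k' : Fin K) (z : Fin (2 * p) → ℝ), fderiv ℝ (H k') (ξ (φ t)) z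
        = ∑ n, z n * fderiv ℝ (H k') (ξ (φ t)) (Pi.single n 1) := by
      intro k' z
      simpa [smul_eq_mul] using clm_pi_expand (fderiv ℝ (H k') (ξ (φ t))) z
    -- chain rule for coordinates of ξ ∘ φ
    have hchain : ∀ (v : Fin K → ℝ) (m : Fin (2 * p)),
        fderiv ℝ (fun s => ξ (φ s)) t v m
          = ∑ α, fderiv ℝ φ t v α * fderiv ℝ ξ (φ t) (Pi.single α 1) m := by
      intro v m
      rw [hgfd, ContinuousLinearMap.comp_apply]
      exact hXi _ m
    -- Euler–Lagrange equations
    have hELeq : ∀ (k' : Fin K) (n : Fin (2 * p)),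
        fderiv ℝ (H k') (ξ (φ t)) (Pi.single n 1)
          = ∑ m, ω (ξ (φ t)) m n * fderiv ℝ (fun s => ξ (φ s)) t (Pi.single k' 1) m := by
      intro k' n
      have h := (hΥ k' n t).symm.trans (hEL k' n t)
      exact (sub_eq_zero.mp h).symm
    -- derivatives of the Lagrangians
    have dL1 := dLag K M (2 * p) φ hφ π hπ ξ hξ (H k) (hH k) (Lag k) (Pi.single k 1)
      (hLag k) t (Pi.single ℓ 1)
    have dL2 := dLag K M (2 * p) φ hφ π hπ ξ hξ (H ℓ) (hH ℓ) (Lag ℓ) (Pi.single ℓ 1)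
      (hLag ℓ) t (Pi.single k 1)
    -- symmetry of second derivatives
    have hsymm : fderiv ℝ (fderiv ℝ φ) t (Pi.single ℓ 1) (Pi.single k 1)
        = fderiv ℝ (fderiv ℝ φ) t (Pi.single k 1) (Pi.single ℓ 1) := by
      have hdd : DifferentiableAt ℝ (fderiv ℝ φ) t :=
        (hφ.fderiv_right (m := 1) (by norm_num)).differentiable (by norm_num) t
      exact second_derivative_symmetric
        (fun y => (hφ.differentiable (by norm_num) y).hasFDerivAt) hdd.hasFDerivAt _ _
    rw [dL1, dL2]
    -- split the sums
    have hsplit1 : (∑ α, (fderiv ℝ π (φ t) (fderiv ℝ φ t (Pi.single ℓ 1)) α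
            * fderiv ℝ φ t (Pi.single k 1) α
          + π (φ t) α * fderiv ℝ (fderiv ℝ φ) t (Pi.single ℓ 1) (Pi.single k 1) α))
        = (∑ α, (∑ β, fderiv ℝ φ t (Pi.single ℓ 1) β
            * fderiv ℝ π (φ t) (Pi.single β 1) α) * fderiv ℝ φ t (Pi.single k 1) α)
          + ∑ α, π (φ t) α
            * fderiv ℝ (fderiv ℝ φ) t (Pi.single ℓ 1) (Pi.single k 1) α := by
      rw [Finset.sum_add_distrib]
      congr 1
      exact Finset.sum_congr rfl fun α _ => by rw [hDπ]
    have hsplit2 : (∑ α, (fderiv ℝ π (φ t) (fderiv ℝ φ t (Pi.single k 1)) α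
            * fderiv ℝ φ t (Pi.single ℓ 1) α
          + π (φ t) α * fderiv ℝ (fderiv ℝ φ) t (Pi.single k 1) (Pi.single ℓ 1) α))
        = (∑ α, (∑ β, fderiv ℝ φ t (Pi.single k 1) β
            * fderiv ℝ π (φ t) (Pi.single β 1) α) * fderiv ℝ φ t (Pi.single ℓ 1) α)
          + ∑ α, π (φ t) α
            * fderiv ℝ (fderiv ℝ φ) t (Pi.single ℓ 1) (Pi.single k 1) α := by
      rw [Finset.sum_add_distrib]
      congr 1
      · exact Finset.sum_congr rfl fun α _ => by rw [hDπ]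
      · exact Finset.sum_congr rfl fun α _ => by rw [hsymm]
    rw [hsplit1, hsplit2]
    -- the main antisymmetrized term
    have hT := T_eq M (2 * p) (fderiv ℝ φ t (Pi.single k 1)) (fderiv ℝ φ t (Pi.single ℓ 1))
      (fun β α => fderiv ℝ π (φ t) (Pi.single β 1) α)
      (fun α m => fderiv ℝ ξ (φ t) (Pi.single α 1) m)
      (ω (ξ (φ t))) (fun α β => hpull (φ t) α β)
    have hmn : ∀ (m n : Fin (2 * p)),
        ω (ξ (φ t)) m n * (∑ α, fderiv ℝ φ t (Pi.single k 1) α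
            * fderiv ℝ ξ (φ t) (Pi.single α 1) m)
          * (∑ β, fderiv ℝ φ t (Pi.single ℓ 1) β * fderiv ℝ ξ (φ t) (Pi.single β 1) n)
        = ω (ξ (φ t)) m n * fderiv ℝ (fun s => ξ (φ s)) t (Pi.single k 1) m
          * fderiv ℝ (fun s => ξ (φ s)) t (Pi.single ℓ 1) n := by
      intro m n
      rw [hchain (Pi.single k 1) m, hchain (Pi.single ℓ 1) n]
    have hT' : (∑ α, (∑ β, fderiv ℝ φ t (Pi.single ℓ 1) β
            * fderiv ℝ π (φ t) (Pi.single β 1) α) * fderiv ℝ φ t (Pi.single k 1) α)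
          - (∑ α, (∑ β, fderiv ℝ φ t (Pi.single k 1) β
            * fderiv ℝ π (φ t) (Pi.single β 1) α) * fderiv ℝ φ t (Pi.single ℓ 1) α)
        = ∑ m, ∑ n, ω (ξ (φ t)) m n * fderiv ℝ (fun s => ξ (φ s)) t (Pi.single k 1) m
            * fderiv ℝ (fun s => ξ (φ s)) t (Pi.single ℓ 1) n := by
      rw [hT]
      exact Finset.sum_congr rfl fun m _ => Finset.sum_congr rfl fun n _ => hmn m n
    -- the Hamiltonian terms
    have hHk' : fderiv ℝ (H k) (ξ (φ t)) (fderiv ℝ (fun s => ξ (φ s)) t (Pi.single ℓ 1))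
        = ∑ n, fderiv ℝ (fun s => ξ (φ s)) t (Pi.single ℓ 1) n
            * fderiv ℝ (H k) (ξ (φ t)) (Pi.single n 1) := hHexp k _
    have hHl' : fderiv ℝ (H ℓ) (ξ (φ t)) (fderiv ℝ (fun s => ξ (φ s)) t (Pi.single k 1))
        = ∑ n, fderiv ℝ (fun s => ξ (φ s)) t (Pi.single k 1) n
            * fderiv ℝ (H ℓ) (ξ (φ t)) (Pi.single n 1) := hHexp ℓ _
    -- final algebra
    have hsa := sum_algebra (2 * p) (ω (ξ (φ t))) (P (ξ (φ t)))
      (fderiv ℝ (fun s => ξ (φ s)) t (Pi.single k 1))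
      (fderiv ℝ (fun s => ξ (φ s)) t (Pi.single ℓ 1))
      (fun n => fderiv ℝ (H k) (ξ (φ t)) (Pi.single n 1))
      (fun n => fderiv ℝ (H ℓ) (ξ (φ t)) (Pi.single n 1))
      (mul_eq_one_comm.mp (hPω (ξ (φ t))))
      (fun n => hELeq k n) (fun n => hELeq ℓ n)
    rw [hHk', hHl']
    calc _ = ((∑ α, (∑ β, fderiv ℝ φ t (Pi.single ℓ 1) β
            * fderiv ℝ π (φ t) (Pi.single β 1) α) * fderiv ℝ φ t (Pi.single k 1) α)
          - (∑ α, (∑ β, fderiv ℝ φ t (Pi.single k 1) β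
            * fderiv ℝ π (φ t) (Pi.single β 1) α) * fderiv ℝ φ t (Pi.single ℓ 1) α))
        - (∑ n, fderiv ℝ (fun s => ξ (φ s)) t (Pi.single ℓ 1) n
            * fderiv ℝ (H k) (ξ (φ t)) (Pi.single n 1))
        + (∑ n, fderiv ℝ (fun s => ξ (φ s)) t (Pi.single k 1) n
            * fderiv ℝ (H ℓ) (ξ (φ t)) (Pi.single n 1)) := by ring
      _ = (∑ m, ∑ n, ω (ξ (φ t)) m n
            * fderiv ℝ (fun s => ξ (φ s)) t (Pi.single k 1) m
            * fderiv ℝ (fun s => ξ (φ s)) t (Pi.single ℓ 1) n)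
        - (∑ n, fderiv ℝ (fun s => ξ (φ s)) t (Pi.single ℓ 1) n
            * fderiv ℝ (H k) (ξ (φ t)) (Pi.single n 1))
        + (∑ n, fderiv ℝ (fun s => ξ (φ s)) t (Pi.single k 1) n
            * fderiv ℝ (H ℓ) (ξ (φ t)) (Pi.single n 1)) := by rw [hT']
      _ = ∑ m, ∑ n, P (ξ (φ t)) m n * fderiv ℝ (H k) (ξ (φ t)) (Pi.single m 1)
            * fderiv ℝ (H ℓ) (ξ (φ t)) (Pi.single n 1) := hsa
  refine ⟨main, ?_, ?_⟩
  · intro h k ℓ t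
    rw [← main k ℓ t, h k ℓ t, sub_self]
  · intro h k ℓ t
    have := main k ℓ t
    rw [h k ℓ t] at this
    linarith [this]
end

section
/- Let T ≥ 1 be an integer, let ω ∈ ℂ be a primitive T-th root of unity, let l ∈ ℤ, and let [l] ∈ {0, 1, …, T−1} be the residue of l modulo T. Then for all z₁, z₂ ∈ ℂ with z₁^T ≠ z₂^T one has z₁^{T−1−[l]} z₂^{[l]} / (z₁^T − z₂^T) = (1/T) Σ_{k=0}^{T−1} ω^{−kl} / (z₁ − ω^k z₂). (Note that z₁^T ≠ z₂^T guarantees z₁ ≠ ω^k z₂ for every k, so all denominators are nonzero.) -/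
/-- The partial fraction identity
`z₁^{T−1−[l]} z₂^{[l]} / (z₁^T − z₂^T) = (1/T) Σ_{k=0}^{T−1} ω^{−kl} / (z₁ − ω^k z₂)`
for a primitive `T`-th root of unity `ω`, where `[l]` is the residue of `l` mod `T`. -/
theorem statement12 (T : ℕ) (hT : 1 ≤ T) (ω : ℂ) (hω : IsPrimitiveRoot ω T)
    (l : ℤ) (z₁ z₂ : ℂ) (h : z₁ ^ T ≠ z₂ ^ T) :
    z₁ ^ (T - 1 - (l % (T : ℤ)).toNat) * z₂ ^ (l % (T : ℤ)).toNat / (z₁ ^ T - z₂ ^ T)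
      = (1 / (T : ℂ)) * ∑ k ∈ Finset.range T, ω ^ (-(k : ℤ) * l) / (z₁ - ω ^ k * z₂) := by
  have hTZ : (T : ℤ) ≠ 0 := by exact_mod_cast (by omega : T ≠ 0)
  have hTC : (T : ℂ) ≠ 0 := Nat.cast_ne_zero.mpr (by omega)
  set m : ℕ := (l % (T : ℤ)).toNat with hmdef
  have hlm : l % (T : ℤ) = (m : ℤ) := (Int.toNat_of_nonneg (Int.emod_nonneg l hTZ)).symm
  have hmT : m < T := by
    have h1 := Int.emod_lt_of_pos l (by exact_mod_cast (by omega : 0 < T) : (0:ℤ) < T)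
    rw [hlm] at h1
    exact_mod_cast h1
  have hωT : ω ^ T = 1 := hω.pow_eq_one
  have hω0 : ω ≠ 0 := by
    intro h0; rw [h0, zero_pow (by omega : T ≠ 0)] at hωT; exact zero_ne_one hωT
  have hzne : ∀ k : ℕ, z₁ - ω ^ k * z₂ ≠ 0 := by
    intro k h0
    apply h
    have h1 : z₁ = ω ^ k * z₂ := by rwa [sub_eq_zero] at h0
    rw [h1, mul_pow, ← pow_mul, mul_comm k T, pow_mul, hωT, one_pow, one_mul]
  have hD : z₁ ^ T - z₂ ^ T ≠ 0 := sub_ne_zero.mpr h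
  have horth : ∀ a : ℤ, ∑ k ∈ Finset.range T, (ω ^ a) ^ k
      = if (T : ℤ) ∣ a then (T : ℂ) else 0 := by
    intro a
    by_cases hdvd : (T : ℤ) ∣ a
    · rw [if_pos hdvd]
      have h1 : ω ^ a = 1 := (hω.zpow_eq_one_iff_dvd a).mpr hdvd
      simp [h1]
    · rw [if_neg hdvd]
      have hne1 : ω ^ a ≠ 1 := fun hc => hdvd ((hω.zpow_eq_one_iff_dvd a).mp hc)
      rw [geom_sum_eq hne1]
      have h2 : (ω ^ a) ^ T = 1 := by
        rw [← zpow_natCast (ω ^ a), ← zpow_mul, mul_comm, zpow_mul, zpow_natCast, hωT, one_zpow]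
      simp [h2]
  have key : (∑ k ∈ Finset.range T, ω ^ (-(k : ℤ) * l) / (z₁ - ω ^ k * z₂)) * (z₁ ^ T - z₂ ^ T)
      = (T : ℂ) * (z₁ ^ (T - 1 - m) * z₂ ^ m) := by
    rw [Finset.sum_mul]
    have step : ∀ k ∈ Finset.range T,
        ω ^ (-(k : ℤ) * l) / (z₁ - ω ^ k * z₂) * (z₁ ^ T - z₂ ^ T)
        = ∑ i ∈ Finset.range T,
            (ω ^ ((T : ℤ) - 1 - i - l)) ^ k * (z₁ ^ i * z₂ ^ (T - 1 - i)) := by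
      intro k _
      have hgeom : (∑ i ∈ Finset.range T, z₁ ^ i * (ω ^ k * z₂) ^ (T - 1 - i))
          * (z₁ - ω ^ k * z₂) = z₁ ^ T - z₂ ^ T := by
        rw [geom_sum₂_mul, mul_pow, ← pow_mul, mul_comm k T, pow_mul, hωT, one_pow, one_mul]
      have hDd : (z₁ ^ T - z₂ ^ T) / (z₁ - ω ^ k * z₂)
          = ∑ i ∈ Finset.range T, z₁ ^ i * (ω ^ k * z₂) ^ (T - 1 - i) := by
        rw [div_eq_iff (hzne k)]; exact hgeom.symm
      calc ω ^ (-(k : ℤ) * l) / (z₁ - ω ^ k * z₂) * (z₁ ^ T - z₂ ^ T)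
          = ω ^ (-(k : ℤ) * l) * ((z₁ ^ T - z₂ ^ T) / (z₁ - ω ^ k * z₂)) := by ring
        _ = ∑ i ∈ Finset.range T, ω ^ (-(k : ℤ) * l) * (z₁ ^ i * (ω ^ k * z₂) ^ (T - 1 - i)) := by
            rw [hDd, Finset.mul_sum]
        _ = ∑ i ∈ Finset.range T,
            (ω ^ ((T : ℤ) - 1 - i - l)) ^ k * (z₁ ^ i * z₂ ^ (T - 1 - i)) := by
            apply Finset.sum_congr rfl
            intro i hi
            have hi' : i < T := Finset.mem_range.mp hi
            have hc : ((T - 1 - i : ℕ) : ℤ) = (T : ℤ) - 1 - i := by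
              push_cast [Nat.cast_sub (by omega : i ≤ T - 1), Nat.cast_sub (by omega : 1 ≤ T)]
              ring
            have hpow : ω ^ (-(k : ℤ) * l) * (ω ^ k) ^ (T - 1 - i)
                = (ω ^ ((T : ℤ) - 1 - i - l)) ^ k := by
              rw [← pow_mul, ← zpow_natCast ω (k * (T - 1 - i)), ← zpow_add₀ hω0,
                ← zpow_natCast (ω ^ ((T : ℤ) - 1 - i - l)) k, ← zpow_mul]
              congr 1
              push_cast [hc]
              ring
            rw [mul_pow (ω ^ k) z₂]
            rw [show ω ^ (-(k : ℤ) * l) * (z₁ ^ i * ((ω ^ k) ^ (T - 1 - i) * z₂ ^ (T - 1 - i)))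
              = (ω ^ (-(k : ℤ) * l) * (ω ^ k) ^ (T - 1 - i)) * (z₁ ^ i * z₂ ^ (T - 1 - i)) by ring]
            rw [hpow]
    rw [Finset.sum_congr rfl step, Finset.sum_comm]
    have inner : ∀ i ∈ Finset.range T,
        (∑ k ∈ Finset.range T, (ω ^ ((T : ℤ) - 1 - i - l)) ^ k * (z₁ ^ i * z₂ ^ (T - 1 - i)))
        = (if (T : ℤ) ∣ ((T : ℤ) - 1 - i - l) then (T : ℂ) else 0)
            * (z₁ ^ i * z₂ ^ (T - 1 - i)) := by
      intro i _
      rw [← Finset.sum_mul, horth]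
    rw [Finset.sum_congr rfl inner]
    rw [Finset.sum_eq_single (T - 1 - m)]
    · have hc1 : ((T - 1 - m : ℕ) : ℤ) = (T : ℤ) - 1 - m := by omega
      have hdvd : (T : ℤ) ∣ ((T : ℤ) - 1 - ((T - 1 - m : ℕ) : ℤ) - l) := by
        rw [hc1]
        have : (T : ℤ) ∣ (l - m) := Int.dvd_self_sub_of_emod_eq hlm
        have h2 : (T : ℤ) - 1 - ((T : ℤ) - 1 - m) - l = -(l - m) := by ring
        rw [h2]
        exact dvd_neg.mpr this
      rw [if_pos hdvd]
      have : T - 1 - (T - 1 - m) = m := by omega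
      rw [this]
    · intro i hi hne
      have hi' : i < T := Finset.mem_range.mp hi
      have hnd : ¬ (T : ℤ) ∣ ((T : ℤ) - 1 - i - l) := by
        intro hdvd
        apply hne
        have hml : (T : ℤ) ∣ (l - m) := Int.dvd_self_sub_of_emod_eq hlm
        have h3 : (T : ℤ) ∣ ((T : ℤ) - 1 - i - m) := by
          have := dvd_add hdvd hml
          have he : ((T : ℤ) - 1 - i - l) + (l - m) = (T : ℤ) - 1 - i - m := by ring
          rwa [he] at this
        obtain ⟨c, hc⟩ := h3
        have hb1 : -(T : ℤ) < (T : ℤ) * c := by omega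
        have hb2 : (T : ℤ) * c < (T : ℤ) := by omega
        have hc0 : c = 0 := by
          rcases lt_trichotomy c 0 with hlt | heq | hgt
          · nlinarith
          · exact heq
          · nlinarith
        rw [hc0, mul_zero] at hc
        omega
      rw [if_neg hnd, zero_mul]
    · intro hnm
      exact absurd (Finset.mem_range.mpr (by omega)) hnm
  have hS : (∑ k ∈ Finset.range T, ω ^ (-(k : ℤ) * l) / (z₁ - ω ^ k * z₂))
      = (T : ℂ) * (z₁ ^ (T - 1 - m) * z₂ ^ m) / (z₁ ^ T - z₂ ^ T) := by
    rw [eq_div_iff hD]; exact key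
  rw [hS]
  field_simp
end

section
/- Let T ≥ 1 and let ω ∈ ℂ be a primitive T-th root of unity. Let E_{ij} (i, j ∈ {1,…,T}) denote the matrix units of M_T(ℂ). For λ, μ ∈ ℂ with μ ≠ ω^{−k}λ for all k ∈ {0,…,T−1}, define the cyclotomic r-matrix r(λ, μ) := (1/T) Σ_{k=0}^{T−1} Σ_{i,j=1}^{T} [ω^{k(j−i)} / (μ − ω^{−k}λ)] E_{ij} ⊗ E_{ji} ∈ M_T(ℂ) ⊗ M_T(ℂ), realized via Kronecker products as a T²×T² matrix. For a, b ∈ M_T(ℂ) write (a⊗b)₁₂ := a⊗b⊗1, (a⊗b)₁₃ := a⊗1⊗b, (a⊗b)₂₃ := 1⊗a⊗b and (a⊗b)₃₂ := 1⊗b⊗a in M_T(ℂ)⊗M_T(ℂ)⊗M_T(ℂ) ≅ M_{T³}(ℂ), and extend these placements linearly to r(λ,μ), defining r₁₂(λ,μ), r₁₃(λ,ν), r₂₃(μ,ν) and r₃₂(ν,μ). Then for all λ, μ, ν ∈ ℂ such that μ − ω^{−k}λ, ν − ω^{−k}λ and ν − ω^{−k}μ are nonzero for every k ∈ {0,…,T−1},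 the classical Yang–Baxter equation holds in M_{T³}(ℂ): [r₁₂(λ,μ), r₁₃(λ,ν)] + [r₁₂(λ,μ), r₂₃(μ,ν)] + [r₃₂(ν,μ), r₁₃(λ,ν)] = 0, where [·,·] is the matrix commutator. -/
open Matrix Kronecker

/-- The scalar coefficient `(1/T) ω^{k(j−i)} / (μ − ω^{−k}λ)` of `E_ij ⊗ E_ji` in the
cyclotomic r-matrix. -/
noncomputable def cycCoef (T : ℕ) (ω : ℂ) (k : ℕ) (i j : Fin T) (lam mu : ℂ) : ℂ :=
  (1 / (T : ℂ)) * ω ^ ((k : ℤ) * (((j : ℕ) : ℤ) - ((i : ℕ) : ℤ))) / (mu - ω ^ (-(k : ℤ)) * lam)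

/-- The placement `r₁₂(λ,μ)` of the cyclotomic r-matrix in `M_T(ℂ)⊗M_T(ℂ)⊗M_T(ℂ)`,
realized via Kronecker products. -/
noncomputable def cycR12 (T : ℕ) (ω lam mu : ℂ) :
    Matrix ((Fin T × Fin T) × Fin T) ((Fin T × Fin T) × Fin T) ℂ :=
  ∑ k ∈ Finset.range T, ∑ i : Fin T, ∑ j : Fin T,
    cycCoef T ω k i j lam mu •
      ((single i j (1 : ℂ) ⊗ₖ single j i (1 : ℂ))
        ⊗ₖ (1 : Matrix (Fin T) (Fin T) ℂ))

/-- The placement `r₁₃(λ,ν)`. -/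
noncomputable def cycR13 (T : ℕ) (ω lam nu : ℂ) :
    Matrix ((Fin T × Fin T) × Fin T) ((Fin T × Fin T) × Fin T) ℂ :=
  ∑ k ∈ Finset.range T, ∑ i : Fin T, ∑ j : Fin T,
    cycCoef T ω k i j lam nu •
      ((single i j (1 : ℂ) ⊗ₖ (1 : Matrix (Fin T) (Fin T) ℂ))
        ⊗ₖ single j i (1 : ℂ))

/-- The placement `r₂₃(μ,ν)`. -/
noncomputable def cycR23 (T : ℕ) (ω mu nu : ℂ) :
    Matrix ((Fin T × Fin T) × Fin T) ((Fin T × Fin T) × Fin T) ℂ :=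
  ∑ k ∈ Finset.range T, ∑ i : Fin T, ∑ j : Fin T,
    cycCoef T ω k i j mu nu •
      (((1 : Matrix (Fin T) (Fin T) ℂ) ⊗ₖ single i j (1 : ℂ))
        ⊗ₖ single j i (1 : ℂ))

/-- The placement `r₃₂(ν,μ)`: the first tensor factor of `r(ν,μ)` is put in slot 3 and the
second in slot 2. -/
noncomputable def cycR32 (T : ℕ) (ω nu mu : ℂ) :
    Matrix ((Fin T × Fin T) × Fin T) ((Fin T × Fin T) × Fin T) ℂ :=
  ∑ k ∈ Finset.range T, ∑ i : Fin T, ∑ j : Fin T,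
    cycCoef T ω k i j nu mu •
      (((1 : Matrix (Fin T) (Fin T) ℂ) ⊗ₖ single j i (1 : ℂ))
        ⊗ₖ single i j (1 : ℂ))
/-- `ω^x` for `x : ZMod T`, well defined when `ω^T = 1`. -/
noncomputable def ee (T : ℕ) (ω : ℂ) (x : ZMod T) : ℂ := ω ^ x.val

section scalar
variable {T : ℕ} [NeZero T] {ω : ℂ} (hω : IsPrimitiveRoot ω T)
include hω

lemma ee_zpow (z : ℤ) : ω ^ z = ee T ω (z : ZMod T) := by
  have h0 : ω ≠ 0 := hω.ne_zero (NeZero.pos T).ne'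
  have h1 : ω ^ (T : ℤ) = 1 := by exact_mod_cast hω.pow_eq_one
  have hz : z = z % T + T * (z / T) := (Int.emod_add_mul_ediv z T).symm
  have hnn : (0:ℤ) ≤ z % T := Int.emod_nonneg z (by exact_mod_cast (NeZero.pos T).ne')
  have hval : ((z : ZMod T)).val = (z % T).toNat := by
    have h := ZMod.val_intCast (n := T) z
    omega
  rw [ee, hval]
  calc ω ^ z = ω ^ (z % T + T * (z / T)) := by rw [← hz]
    _ = ω ^ (z % T) * (ω ^ (T:ℤ)) ^ (z / T) := by
        rw [zpow_add₀ h0, _root_.zpow_mul]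
    _ = ω ^ (z % T) := by rw [h1, _root_.one_zpow, mul_one]
    _ = ω ^ (z % (T:ℤ)).toNat := by rw [← zpow_natCast, Int.toNat_of_nonneg hnn]

lemma ee_add (x y : ZMod T) : ee T ω (x + y) = ee T ω x * ee T ω y := by
  have hx : ((x.val : ℤ) : ZMod T) = x := by push_cast; simp [ZMod.natCast_val, ZMod.cast_id]
  have hy : ((y.val : ℤ) : ZMod T) = y := by push_cast; simp [ZMod.natCast_val, ZMod.cast_id]
  have h := ee_zpow (T := T) hω ((x.val : ℤ) + y.val)
  rw [Int.cast_add, hx, hy] at h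
  rw [← h, zpow_add₀ (hω.ne_zero (NeZero.pos T).ne')]
  rw [ee, ee, ← zpow_natCast, ← zpow_natCast]

omit hω in
lemma ee_zero : ee T ω 0 = 1 := by simp [ee, ZMod.val_zero]

lemma ee_ne_zero (x : ZMod T) : ee T ω x ≠ 0 :=
  pow_ne_zero _ (hω.ne_zero (NeZero.pos T).ne')

lemma ee_neg_mul (x : ZMod T) : ee T ω (-x) * ee T ω x = 1 := by
  rw [← ee_add hω, neg_add_cancel, ee_zero]

/-- every value of `ee` is `ω^{-k}` for some `k < T`. -/
lemma ee_eq_inv_pow (x : ZMod T) : ∃ k < T, ee T ω x = ω ^ (-(k : ℤ)) := by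
  rcases Nat.eq_zero_or_pos x.val with h | h
  · refine ⟨0, NeZero.pos T, ?_⟩
    simp [ee, h]
  · refine ⟨T - x.val, by have := ZMod.val_lt x; omega, ?_⟩
    have hlt := ZMod.val_lt x
    have hx : ((x.val : ℤ) : ZMod T) = x := by push_cast; simp [ZMod.natCast_val, ZMod.cast_id]
    rw [ee_zpow hω]
    congr 1
    rw [show (-(((T - x.val : ℕ)) : ℤ)) = (x.val : ℤ) - T by omega]
    push_cast
    simp [ZMod.natCast_val, ZMod.cast_id, ZMod.natCast_self]

end scalar
lemma frac_id (X Y Z w : ℂ) (hX : X ≠ 0) (hY : Y ≠ 0) (hZ : Z ≠ 0) (h : Y - w * X = Z) :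
    (1/X)*(1/Y) = (1/X)*(1/Z) - w*((1/Y)*(1/Z)) := by
  have h' : Z = Y - w * X := h.symm
  subst h'
  have hZ' : Y - X * w ≠ 0 := by rwa [mul_comm X w]
  field_simp

/-- `∑_x ω^{mx}/(μ - ω^{-x} λ)` over `x : ZMod T`. -/
noncomputable def SS (T : ℕ) [NeZero T] (ω : ℂ) (m : ℤ) (lam mu : ℂ) : ℂ :=
  ∑ x : ZMod T, ee T ω ((m : ZMod T) * x) / (mu - ee T ω (-x) * lam)

section scalar2
variable {T : ℕ} [NeZero T] {ω : ℂ} (hω : IsPrimitiveRoot ω T)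
include hω

lemma denom_ne {lam mu : ℂ} (h : ∀ k < T, mu - ω ^ (-(k : ℤ)) * lam ≠ 0) (x : ZMod T) :
    mu - ee T ω x * lam ≠ 0 := by
  obtain ⟨k, hk, hee⟩ := ee_eq_inv_pow hω x
  rw [hee]; exact h k hk

omit hω in
lemma ee_congr {a b : ZMod T} (h : a = b) : ee T ω a = ee T ω b := by rw [h]

/-- reflection: `SS (-(m+1)) μ ν = - SS m ν μ`. -/
lemma SS_reflect {mu nu : ℂ} (h : ∀ k < T, nu - ω ^ (-(k : ℤ)) * mu ≠ 0) (m : ℤ) :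
    SS T ω (-(m+1)) mu nu = - SS T ω m nu mu := by
  have h' : ∀ x : ZMod T, nu - ee T ω x * mu ≠ 0 := denom_ne hω h
  rw [SS, SS, ← Finset.sum_neg_distrib]
  apply Fintype.sum_equiv (Equiv.neg (ZMod T))
  intro x
  simp only [Equiv.neg_apply, neg_neg]
  have hinv : ee T ω x * ee T ω (-x) = 1 := by
    rw [← ee_add hω, add_neg_cancel, ee_zero]
  have hd : mu - ee T ω x * nu = -(ee T ω x) * (nu - ee T ω (-x) * mu) := by
    have hh : ee T ω x * (ee T ω (-x) * mu) = mu := by rw [← mul_assoc, hinv, one_mul]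
    linear_combination -hh
  have hnum : ee T ω (((-(m+1) : ℤ) : ZMod T) * x) * ee T ω x
      = ee T ω ((m : ZMod T) * (-x)) := by
    rw [← ee_add hω]
    apply ee_congr
    push_cast
    ring
  rw [hd, ← hnum, neg_mul, div_neg, neg_neg,
    mul_comm (ee T ω (((-(m+1) : ℤ) : ZMod T) * x)) (ee T ω x),
    mul_div_mul_left _ _ (ee_ne_zero hω x)]

/-- the main functional identity. -/
lemma SS_key {lam mu nu : ℂ}
    (h₁ : ∀ k < T, mu - ω ^ (-(k : ℤ)) * lam ≠ 0)
    (h₂ : ∀ k < T, nu - ω ^ (-(k : ℤ)) * lam ≠ 0)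
    (h₃ : ∀ k < T, nu - ω ^ (-(k : ℤ)) * mu ≠ 0) (m n : ℤ) :
    SS T ω m lam mu * SS T ω n lam nu
      = SS T ω (m+n) lam mu * SS T ω n mu nu + SS T ω (m+n) lam nu * SS T ω m nu mu := by
  have hX : ∀ x : ZMod T, mu - ee T ω x * lam ≠ 0 := denom_ne hω h₁
  have hY : ∀ x : ZMod T, nu - ee T ω x * lam ≠ 0 := denom_ne hω h₂
  have hZ : ∀ x : ZMod T, nu - ee T ω x * mu ≠ 0 := denom_ne hω h₃
  have keyterm : ∀ x y : ZMod T,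
      ee T ω ((m : ZMod T) * x) / (mu - ee T ω (-x) * lam)
        * (ee T ω ((n : ZMod T) * y) / (nu - ee T ω (-y) * lam))
      = ee T ω (((m+n : ℤ) : ZMod T) * x) / (mu - ee T ω (-x) * lam)
          * (ee T ω ((n : ZMod T) * (y - x)) / (nu - ee T ω (-(y-x)) * mu))
        - ee T ω (((m+n : ℤ) : ZMod T) * y) / (nu - ee T ω (-y) * lam)
          * (ee T ω (((-(m+1) : ℤ) : ZMod T) * (y - x)) / (nu - ee T ω (-(y-x)) * mu)) := by
    intro x y
    set X := mu - ee T ω (-x) * lam with hXdef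
    set Y := nu - ee T ω (-y) * lam with hYdef
    set Z := nu - ee T ω (-(y-x)) * mu with hZdef
    have hXn : X ≠ 0 := hX _
    have hYn : Y ≠ 0 := hY _
    have hZn : Z ≠ 0 := hZ _
    have hrel : Y - ee T ω (x - y) * X = Z := by
      have h1 : ee T ω (x - y) * ee T ω (-x) = ee T ω (-y) := by
        rw [← ee_add hω]; apply ee_congr; ring
      have h2 : ee T ω (x - y) = ee T ω (-(y - x)) := by apply ee_congr; ring
      rw [hXdef, hYdef, hZdef, mul_sub, ← mul_assoc, h1, h2]
      ring
    have num1 : ee T ω (((m+n : ℤ) : ZMod T) * x) * ee T ω ((n : ZMod T) * (y - x))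
        = ee T ω ((m : ZMod T) * x) * ee T ω ((n : ZMod T) * y) := by
      rw [← ee_add hω, ← ee_add hω]; apply ee_congr; push_cast; ring
    have num2 : ee T ω (((m+n : ℤ) : ZMod T) * y) * ee T ω (((-(m+1) : ℤ) : ZMod T) * (y - x))
        = ee T ω ((m : ZMod T) * x) * ee T ω ((n : ZMod T) * y) * ee T ω (x - y) := by
      rw [← ee_add hω, ← ee_add hω, ← ee_add hω]; apply ee_congr; push_cast; ring
    calc ee T ω ((m : ZMod T) * x) / X * (ee T ω ((n : ZMod T) * y) / Y)
        = (ee T ω ((m : ZMod T) * x) * ee T ω ((n : ZMod T) * y)) * ((1/X)*(1/Y)) := by ring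
      _ = (ee T ω ((m : ZMod T) * x) * ee T ω ((n : ZMod T) * y)) *
            ((1/X)*(1/Z) - ee T ω (x - y)*((1/Y)*(1/Z))) := by
          rw [frac_id X Y Z _ hXn hYn hZn hrel]
      _ = (ee T ω (((m+n : ℤ) : ZMod T) * x) * ee T ω ((n : ZMod T) * (y - x))) * ((1/X)*(1/Z))
          - (ee T ω (((m+n : ℤ) : ZMod T) * y) * ee T ω (((-(m+1) : ℤ) : ZMod T) * (y - x)))
            * ((1/Y)*(1/Z)) := by rw [num1, num2]; ring
      _ = _ := by ring
  calc SS T ω m lam mu * SS T ω n lam nu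
      = ∑ x : ZMod T, ∑ y : ZMod T,
          ee T ω ((m : ZMod T) * x) / (mu - ee T ω (-x) * lam)
            * (ee T ω ((n : ZMod T) * y) / (nu - ee T ω (-y) * lam)) := by
        rw [SS, SS, Finset.sum_mul_sum]
    _ = (∑ x : ZMod T, ∑ y : ZMod T,
          ee T ω (((m+n : ℤ) : ZMod T) * x) / (mu - ee T ω (-x) * lam)
            * (ee T ω ((n : ZMod T) * (y - x)) / (nu - ee T ω (-(y-x)) * mu)))
        - (∑ x : ZMod T, ∑ y : ZMod T,
          ee T ω (((m+n : ℤ) : ZMod T) * y) / (nu - ee T ω (-y) * lam)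
            * (ee T ω (((-(m+1) : ℤ) : ZMod T) * (y - x)) / (nu - ee T ω (-(y-x)) * mu))) := by
        rw [← Finset.sum_sub_distrib]
        exact Finset.sum_congr rfl (fun x _ => by
          rw [← Finset.sum_sub_distrib]
          exact Finset.sum_congr rfl (fun y _ => keyterm x y))
    _ = SS T ω (m+n) lam mu * SS T ω n mu nu
        - SS T ω (m+n) lam nu * SS T ω (-(m+1)) mu nu := by
        congr 1
        · rw [SS, SS, Finset.sum_mul_sum]
          exact Finset.sum_congr rfl (fun x _ =>
            Fintype.sum_equiv (Equiv.subRight x) _ _ (fun y => rfl))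
        · rw [SS, SS, Finset.sum_mul_sum]
          conv_lhs => rw [Finset.sum_comm]
          exact Finset.sum_congr rfl (fun y _ =>
            Fintype.sum_equiv (Equiv.subLeft y) _ _ (fun x => rfl))
    _ = _ := by rw [SS_reflect hω h₃ m]; ring

end scalar2
section matrixside

variable {T : ℕ}

/-- slot-12 placement of `E_ij ⊗ E_ji`. -/
noncomputable def P12 (T : ℕ) (i j : Fin T) :
    Matrix ((Fin T × Fin T) × Fin T) ((Fin T × Fin T) × Fin T) ℂ :=
  (single i j (1 : ℂ) ⊗ₖ single j i (1 : ℂ)) ⊗ₖ (1 : Matrix (Fin T) (Fin T) ℂ)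

/-- slot-13 placement. -/
noncomputable def P13 (T : ℕ) (i j : Fin T) :
    Matrix ((Fin T × Fin T) × Fin T) ((Fin T × Fin T) × Fin T) ℂ :=
  (single i j (1 : ℂ) ⊗ₖ (1 : Matrix (Fin T) (Fin T) ℂ)) ⊗ₖ single j i (1 : ℂ)

/-- slot-23 placement. -/
noncomputable def P23 (T : ℕ) (i j : Fin T) :
    Matrix ((Fin T × Fin T) × Fin T) ((Fin T × Fin T) × Fin T) ℂ :=
  ((1 : Matrix (Fin T) (Fin T) ℂ) ⊗ₖ single i j (1 : ℂ)) ⊗ₖ single j i (1 : ℂ)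

/-- elementary triple tensor. -/
noncomputable def Tri (T : ℕ) (a b c d e f : Fin T) :
    Matrix ((Fin T × Fin T) × Fin T) ((Fin T × Fin T) × Fin T) ℂ :=
  (single a b (1 : ℂ) ⊗ₖ single c d (1 : ℂ)) ⊗ₖ single e f (1 : ℂ)

lemma std_mul (i j k l : Fin T) :
    single i j (1 : ℂ) * single k l (1 : ℂ)
      = if j = k then single i l (1 : ℂ) else 0 := by
  split_ifs with h
  · subst h; simp
  · simp [h]

lemma kron3_mul (A B C D E F : Matrix (Fin T) (Fin T) ℂ) :
    ((A ⊗ₖ B) ⊗ₖ C) * ((D ⊗ₖ E) ⊗ₖ F) = ((A * D) ⊗ₖ (B * E)) ⊗ₖ (C * F) := by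
  rw [Matrix.mul_kronecker_mul, Matrix.mul_kronecker_mul]

lemma P12_mul_P13 (i j k l : Fin T) :
    P12 T i j * P13 T k l = if j = k then Tri T i l j i l k else 0 := by
  rw [P12, P13, kron3_mul, Matrix.mul_one, Matrix.one_mul, std_mul]
  split_ifs with h
  · rw [Tri]
  · simp

lemma P13_mul_P12 (k l i j : Fin T) :
    P13 T k l * P12 T i j = if l = i then Tri T k j j i l k else 0 := by
  rw [P12, P13, kron3_mul, Matrix.mul_one, Matrix.one_mul, std_mul]
  split_ifs with h
  · rw [Tri]
  · simp

lemma P12_mul_P23 (i j k l : Fin T) :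
    P12 T i j * P23 T k l = if i = k then Tri T i j j l l k else 0 := by
  rw [P12, P23, kron3_mul, Matrix.mul_one, Matrix.one_mul, std_mul]
  split_ifs with h
  · rw [Tri]
  · simp

lemma P23_mul_P12 (k l i j : Fin T) :
    P23 T k l * P12 T i j = if l = j then Tri T i j k i l k else 0 := by
  rw [P12, P23, kron3_mul, Matrix.mul_one, Matrix.one_mul, std_mul]
  split_ifs with h
  · rw [Tri]
  · simp

lemma P23_mul_P13 (k l i j : Fin T) :
    P23 T k l * P13 T i j = if k = j then Tri T i j k l l i else 0 := by
  rw [P13, P23, kron3_mul, Matrix.mul_one, Matrix.one_mul, std_mul]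
  split_ifs with h
  · rw [Tri]
  · simp

lemma P13_mul_P23 (i j k l : Fin T) :
    P13 T i j * P23 T k l = if i = l then Tri T i j k l j k else 0 := by
  rw [P13, P23, kron3_mul, Matrix.mul_one, Matrix.one_mul, std_mul]
  split_ifs with h
  · rw [Tri]
  · simp

lemma prod_expand (a b : Fin T → Fin T → ℂ)
    (M N : Fin T → Fin T → Matrix ((Fin T × Fin T) × Fin T) ((Fin T × Fin T) × Fin T) ℂ) :
    (∑ i : Fin T, ∑ j : Fin T, a i j • M i j) * (∑ k : Fin T, ∑ l : Fin T, b k l • N k l)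
      = ∑ i : Fin T, ∑ j : Fin T, ∑ k : Fin T, ∑ l : Fin T,
          (a i j * b k l) • (M i j * N k l) := by
  rw [Finset.sum_mul]
  refine Finset.sum_congr rfl (fun i _ => ?_)
  rw [Finset.sum_mul]
  refine Finset.sum_congr rfl (fun j _ => ?_)
  rw [Finset.mul_sum]
  refine Finset.sum_congr rfl (fun k _ => ?_)
  rw [Finset.mul_sum]
  refine Finset.sum_congr rfl (fun l _ => ?_)
  rw [smul_mul_assoc, mul_smul_comm, smul_smul]

lemma sum12_13 (a b : Fin T → Fin T → ℂ) :
    (∑ i : Fin T, ∑ j : Fin T, a i j • P12 T i j)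
      * (∑ k : Fin T, ∑ l : Fin T, b k l • P13 T k l)
      = ∑ x : Fin T, ∑ y : Fin T, ∑ z : Fin T, (a x y * b y z) • Tri T x z y x z y := by
  rw [prod_expand]
  refine Finset.sum_congr rfl (fun i _ => ?_)
  refine Finset.sum_congr rfl (fun j _ => ?_)
  rw [Finset.sum_comm]
  simp only [P12_mul_P13, smul_ite, smul_zero, Finset.sum_ite_eq, Finset.mem_univ, if_true]

lemma sum13_12 (b a : Fin T → Fin T → ℂ) :
    (∑ k : Fin T, ∑ l : Fin T, b k l • P13 T k l)
      * (∑ i : Fin T, ∑ j : Fin T, a i j • P12 T i j)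
      = ∑ x : Fin T, ∑ y : Fin T, ∑ z : Fin T, (b x z * a z y) • Tri T x y y z z x := by
  rw [prod_expand]
  refine Finset.sum_congr rfl (fun k _ => ?_)
  rw [show (∑ y : Fin T, ∑ z : Fin T, (b k z * a z y) • Tri T k y y z z k)
      = ∑ z : Fin T, ∑ y : Fin T, (b k z * a z y) • Tri T k y y z z k from Finset.sum_comm]
  refine Finset.sum_congr rfl (fun l _ => ?_)
  rw [Finset.sum_comm]
  simp only [P13_mul_P12, smul_ite, smul_zero, Finset.sum_ite_eq, Finset.mem_univ, if_true]

lemma sum12_23 (a c : Fin T → Fin T → ℂ) :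
    (∑ i : Fin T, ∑ j : Fin T, a i j • P12 T i j)
      * (∑ k : Fin T, ∑ l : Fin T, c k l • P23 T k l)
      = ∑ x : Fin T, ∑ y : Fin T, ∑ z : Fin T, (a x y * c x z) • Tri T x y y z z x := by
  rw [prod_expand]
  refine Finset.sum_congr rfl (fun i _ => ?_)
  refine Finset.sum_congr rfl (fun j _ => ?_)
  rw [Finset.sum_comm]
  simp only [P12_mul_P23, smul_ite, smul_zero, Finset.sum_ite_eq, Finset.mem_univ, if_true]

lemma sum23_12 (c a : Fin T → Fin T → ℂ) :
    (∑ k : Fin T, ∑ l : Fin T, c k l • P23 T k l)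
      * (∑ i : Fin T, ∑ j : Fin T, a i j • P12 T i j)
      = ∑ x : Fin T, ∑ y : Fin T, ∑ z : Fin T, (c y z * a x z) • Tri T x z y x z y := by
  rw [prod_expand]
  rw [show (∑ x : Fin T, ∑ y : Fin T, ∑ z : Fin T, (c y z * a x z) • Tri T x z y x z y)
      = ∑ y : Fin T, ∑ z : Fin T, ∑ x : Fin T, (c y z * a x z) • Tri T x z y x z y from by
    rw [Finset.sum_comm]
    exact Finset.sum_congr rfl (fun _ _ => Finset.sum_comm)]
  refine Finset.sum_congr rfl (fun k _ => ?_)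
  refine Finset.sum_congr rfl (fun l _ => ?_)
  simp only [P23_mul_P12, smul_ite, smul_zero, Finset.sum_ite_eq, Finset.mem_univ, if_true]

lemma sum32_13 (c b : Fin T → Fin T → ℂ) :
    (∑ k : Fin T, ∑ l : Fin T, c k l • P23 T k l)
      * (∑ i : Fin T, ∑ j : Fin T, b i j • P13 T i j)
      = ∑ x : Fin T, ∑ y : Fin T, ∑ z : Fin T, (c y z * b x y) • Tri T x y y z z x := by
  rw [prod_expand]
  rw [show (∑ x : Fin T, ∑ y : Fin T, ∑ z : Fin T, (c y z * b x y) • Tri T x y y z z x)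
      = ∑ y : Fin T, ∑ z : Fin T, ∑ x : Fin T, (c y z * b x y) • Tri T x y y z z x from by
    rw [Finset.sum_comm]
    exact Finset.sum_congr rfl (fun _ _ => Finset.sum_comm)]
  refine Finset.sum_congr rfl (fun k _ => ?_)
  refine Finset.sum_congr rfl (fun l _ => ?_)
  simp only [P23_mul_P13, smul_ite, smul_zero, Finset.sum_ite_eq, Finset.mem_univ, if_true]

lemma sum13_32 (b c : Fin T → Fin T → ℂ) :
    (∑ i : Fin T, ∑ j : Fin T, b i j • P13 T i j)
      * (∑ k : Fin T, ∑ l : Fin T, c k l • P23 T k l)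
      = ∑ x : Fin T, ∑ y : Fin T, ∑ z : Fin T, (b x z * c y x) • Tri T x z y x z y := by
  rw [prod_expand]
  refine Finset.sum_congr rfl (fun i _ => ?_)
  rw [show (∑ y : Fin T, ∑ z : Fin T, (b i z * c y i) • Tri T i z y i z y)
      = ∑ z : Fin T, ∑ y : Fin T, (b i z * c y i) • Tri T i z y i z y from Finset.sum_comm]
  refine Finset.sum_congr rfl (fun j _ => ?_)
  simp only [P13_mul_P23, smul_ite, smul_zero, Finset.sum_ite_eq, Finset.mem_univ, if_true]

end matrixside
/-- the coefficient function `((1/T) Σ_k …)` in closed sum form. -/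
noncomputable def coefA (T : ℕ) [NeZero T] (ω lam mu : ℂ) (i j : Fin T) : ℂ :=
  (T : ℂ)⁻¹ * SS T ω (((j : ℕ) : ℤ) - ((i : ℕ) : ℤ)) lam mu

section bridge
variable {T : ℕ} [NeZero T] {ω : ℂ} (hω : IsPrimitiveRoot ω T)
include hω

lemma sum_cycCoef (i j : Fin T) (lam mu : ℂ) :
    ∑ k ∈ Finset.range T, cycCoef T ω k i j lam mu = coefA T ω lam mu i j := by
  rw [coefA, SS, Finset.mul_sum]
  rw [← Fin.sum_univ_eq_sum_range (fun k => cycCoef T ω k i j lam mu) T]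
  have hbij : Function.Bijective (fun k : Fin T => ((k : ℕ) : ZMod T)) := by
    rw [Fintype.bijective_iff_injective_and_card]
    constructor
    · intro p q hpq
      have h1 := congrArg ZMod.val hpq
      simp only [ZMod.val_cast_of_lt p.2, ZMod.val_cast_of_lt q.2] at h1
      exact Fin.ext h1
    · simp [ZMod.card]
  apply Fintype.sum_bijective _ hbij
  intro k
  beta_reduce
  rw [cycCoef]
  have hn : ω ^ (((k : ℕ) : ℤ) * (((j : ℕ) : ℤ) - ((i : ℕ) : ℤ)))
      = ee T ω (((((j : ℕ) : ℤ) - ((i : ℕ) : ℤ) : ℤ) : ZMod T) * ((k : ℕ) : ZMod T)) := by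
    rw [ee_zpow hω]
    apply ee_congr
    push_cast
    ring
  have hd : ω ^ (-((k : ℕ) : ℤ)) = ee T ω (-((k : ℕ) : ZMod T)) := by
    rw [ee_zpow hω]
    apply ee_congr
    push_cast
    ring
  rw [hn, hd]
  ring

lemma cycR12_eq (lam mu : ℂ) :
    cycR12 T ω lam mu = ∑ i : Fin T, ∑ j : Fin T, coefA T ω lam mu i j • P12 T i j := by
  rw [cycR12, Finset.sum_comm]
  refine Finset.sum_congr rfl (fun i _ => ?_)
  rw [Finset.sum_comm]
  refine Finset.sum_congr rfl (fun j _ => ?_)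
  rw [← Finset.sum_smul, sum_cycCoef hω]
  rfl

lemma cycR13_eq (lam nu : ℂ) :
    cycR13 T ω lam nu = ∑ i : Fin T, ∑ j : Fin T, coefA T ω lam nu i j • P13 T i j := by
  rw [cycR13, Finset.sum_comm]
  refine Finset.sum_congr rfl (fun i _ => ?_)
  rw [Finset.sum_comm]
  refine Finset.sum_congr rfl (fun j _ => ?_)
  rw [← Finset.sum_smul, sum_cycCoef hω]
  rfl

lemma cycR23_eq (mu nu : ℂ) :
    cycR23 T ω mu nu = ∑ i : Fin T, ∑ j : Fin T, coefA T ω mu nu i j • P23 T i j := by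
  rw [cycR23, Finset.sum_comm]
  refine Finset.sum_congr rfl (fun i _ => ?_)
  rw [Finset.sum_comm]
  refine Finset.sum_congr rfl (fun j _ => ?_)
  rw [← Finset.sum_smul, sum_cycCoef hω]
  rfl

lemma cycR32_eq (nu mu : ℂ) :
    cycR32 T ω nu mu = ∑ i : Fin T, ∑ j : Fin T, coefA T ω nu mu j i • P23 T i j := by
  have step : cycR32 T ω nu mu
      = ∑ i : Fin T, ∑ j : Fin T, coefA T ω nu mu i j • P23 T j i := by
    rw [cycR32, Finset.sum_comm]
    refine Finset.sum_congr rfl (fun i _ => ?_)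
    rw [Finset.sum_comm]
    refine Finset.sum_congr rfl (fun j _ => ?_)
    rw [← Finset.sum_smul, sum_cycCoef hω]
    rfl
  rw [step]
  exact Finset.sum_comm

end bridge
/-- The cyclotomic r-matrix satisfies the (generalized, non-skew-symmetric) classical
Yang–Baxter equation
`[r₁₂(λ,μ), r₁₃(λ,ν)] + [r₁₂(λ,μ), r₂₃(μ,ν)] + [r₃₂(ν,μ), r₁₃(λ,ν)] = 0`. -/
theorem statement13 (T : ℕ) (hT : 1 ≤ T) (ω : ℂ) (hω : IsPrimitiveRoot ω T)
    (lam mu nu : ℂ)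
    (h₁ : ∀ k < T, mu - ω ^ (-(k : ℤ)) * lam ≠ 0)
    (h₂ : ∀ k < T, nu - ω ^ (-(k : ℤ)) * lam ≠ 0)
    (h₃ : ∀ k < T, nu - ω ^ (-(k : ℤ)) * mu ≠ 0) :
    ⁅cycR12 T ω lam mu, cycR13 T ω lam nu⁆ + ⁅cycR12 T ω lam mu, cycR23 T ω mu nu⁆
        + ⁅cycR32 T ω nu mu, cycR13 T ω lam nu⁆ = 0 := by
  have : NeZero T := ⟨by omega⟩
  have lie : ∀ A B : Matrix ((Fin T × Fin T) × Fin T) ((Fin T × Fin T) × Fin T) ℂ,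
      ⁅A, B⁆ = A * B - B * A := fun _ _ => rfl
  rw [lie, lie, lie]
  rw [cycR12_eq hω, cycR13_eq hω, cycR23_eq hω, cycR32_eq hω]
  rw [sum12_13, sum13_12, sum12_23, sum23_12, sum32_13, sum13_32]
  simp only [← Finset.sum_sub_distrib, ← Finset.sum_add_distrib]
  refine Finset.sum_eq_zero (fun x _ => ?_)
  refine Finset.sum_eq_zero (fun y _ => ?_)
  refine Finset.sum_eq_zero (fun z _ => ?_)
  have hC : coefA T ω lam mu x y * coefA T ω lam nu y z
      = coefA T ω mu nu y z * coefA T ω lam mu x z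
        + coefA T ω lam nu x z * coefA T ω nu mu x y := by
    have h := SS_key hω h₁ h₂ h₃ (((y : ℕ) : ℤ) - ((x : ℕ) : ℤ))
      (((z : ℕ) : ℤ) - ((y : ℕ) : ℤ))
    rw [show (((y : ℕ) : ℤ) - ((x : ℕ) : ℤ)) + ((((z : ℕ) : ℤ)) - ((y : ℕ) : ℤ))
        = (((z : ℕ) : ℤ) - ((x : ℕ) : ℤ)) from by ring] at h
    simp only [coefA]
    linear_combination ((T : ℂ)⁻¹ * (T : ℂ)⁻¹) * h
  have hA : coefA T ω lam nu x z * coefA T ω lam mu z y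
      = coefA T ω lam mu x y * coefA T ω mu nu x z
        + coefA T ω nu mu z y * coefA T ω lam nu x y := by
    have h := SS_key hω h₁ h₂ h₃ (((y : ℕ) : ℤ) - ((z : ℕ) : ℤ))
      (((z : ℕ) : ℤ) - ((x : ℕ) : ℤ))
    rw [show (((y : ℕ) : ℤ) - ((z : ℕ) : ℤ)) + ((((z : ℕ) : ℤ)) - ((x : ℕ) : ℤ))
        = (((y : ℕ) : ℤ) - ((x : ℕ) : ℤ)) from by ring] at h
    simp only [coefA]
    linear_combination ((T : ℂ)⁻¹ * (T : ℂ)⁻¹) * h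
  rw [hC, hA]
  simp only [add_smul]
  abel
end

section
/- Let n ≥ 1 and let R : M_n(ℂ) → M_n(ℂ) be a linear solution of the modified classical Yang–Baxter equation for the commutator bracket on M_n(ℂ). Let F, G : M_n(ℂ) → M_n(ℂ) be differentiable conjugation-equivariant maps. Define the vector fields V_F(L) := (1/2)[R(F(L)), L] and V_G(L) := (1/2)[R(G(L)), L] on M_n(ℂ). Then V_F and V_G commute: for every L ∈ M_n(ℂ), DV_F(L)[V_G(L)] = DV_G(L)[V_F(L)], where D denotes the Fréchet derivative. (Equivalently, since [F(L), L] = 0 = [G(L), L], one has V_F(L) = [R_±(F(L)), L] with R_± = (1/2)(R ± id), so the flows of the hierarchy of Lax equations ∂_{t^k} L = [R_±(F_k(L)), L] generated by conjugation-equivariant maps are pairwise compatible.) -/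
open Matrix

attribute [local instance] Matrix.normedAddCommGroup Matrix.normedSpace
section
attribute [local instance 100] LieRing.ofAssociativeRing

abbrev Mat (n : ℕ) := Matrix (Fin n) (Fin n) ℂ

noncomputable def mulB (n : ℕ) : Mat n →L[ℂ] Mat n →L[ℂ] Mat n :=
  LinearMap.toContinuousLinearMap
    { toFun := fun X => LinearMap.toContinuousLinearMap (LinearMap.mul ℂ (Mat n) X)
      map_add' := by intro x y; ext z; simp [add_mul]
      map_smul' := by intro c x; ext z; simp [smul_mul_assoc] }

@[simp] lemma mulB_apply {n : ℕ} (x y : Mat n) : mulB n x y = x * y := by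
  simp [mulB]

noncomputable def lieB (n : ℕ) : Mat n →L[ℂ] Mat n →L[ℂ] Mat n :=
  mulB n - (show Mat n →L[ℂ] Mat n →L[ℂ] Mat n from (mulB n).flip)

@[simp] lemma lieB_apply {n : ℕ} (x y : Mat n) : lieB n x y = ⁅x, y⁆ := by
  simp [lieB, Ring.lie_def]
  exact rfl

lemma diff_det {n : ℕ} {f : ℂ → Mat n} (hf : ∀ i j, Differentiable ℂ fun t => f t i j) :
    Differentiable ℂ fun t => (f t).det := by
  simp only [Matrix.det_apply']
  apply Differentiable.fun_sum
  intro σ _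
  apply Differentiable.const_mul
  apply Differentiable.fun_finsetProd
  intro i _
  exact hf (σ i) i

lemma diff_adjugate {n : ℕ} {f : ℂ → Mat n} (hf : ∀ i j, Differentiable ℂ fun t => f t i j)
    (i j : Fin n) : Differentiable ℂ fun t => (f t).adjugate i j := by
  simp only [Matrix.adjugate_apply]
  apply diff_det
  intro k l
  rcases eq_or_ne k j with hk | hk
  · simp [hk, Matrix.updateRow_apply]
  · simp only [Matrix.updateRow_apply, hk, if_false]
    exact hf k l

/-- entries of `g t := 1 + t • A` -/
lemma diff_g {n : ℕ} (A : Mat n) (i j : Fin n) :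
    Differentiable ℂ fun t : ℂ => (1 + t • A) i j := by
  simp only [Matrix.add_apply, Matrix.smul_apply, smul_eq_mul]
  exact (differentiable_const _).add (differentiable_id.mul (differentiable_const _))

lemma diffAt_inv_curve {n : ℕ} (A : Mat n) :
    DifferentiableAt ℂ (fun t : ℂ => (1 + t • A)⁻¹) 0 := by
  have hdet : Differentiable ℂ fun t : ℂ => (1 + t • A).det := diff_det (diff_g A)
  have hdet0 : (1 + (0:ℂ) • A).det = 1 := by simp
  have hinv : DifferentiableAt ℂ (fun t : ℂ => Ring.inverse ((1 + t • A).det)) 0 := by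
    simp only [Ring.inverse_eq_inv']
    exact (hdet.differentiableAt).inv (by simp)
  have hadj : DifferentiableAt ℂ (fun t : ℂ => (1 + t • A).adjugate) 0 := by
    refine (differentiable_pi.2 fun i => differentiable_pi.2 fun j => ?_).differentiableAt
    exact diff_adjugate (diff_g A) i j
  have : DifferentiableAt ℂ
      (fun t : ℂ => Ring.inverse ((1 + t • A).det) • (1 + t • A).adjugate) 0 :=
    hinv.smul hadj
  simpa only [← Matrix.inv_def] using this

lemma eventually_isUnit {n : ℕ} (A : Mat n) : ∀ᶠ t : ℂ in nhds 0, IsUnit (1 + t • A) := by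
  have hdet : Differentiable ℂ fun t : ℂ => (1 + t • A).det := diff_det (diff_g A)
  have h0 : (fun t : ℂ => (1 + t • A).det) 0 ≠ 0 := by simp
  have := (hdet.continuous.continuousAt (x := (0:ℂ))).eventually_ne h0
  filter_upwards [this] with t ht
  rw [Matrix.isUnit_iff_isUnit_det]
  exact isUnit_iff_ne_zero.2 ht

lemma inv_curve_hasDerivAt {n : ℕ} (A : Mat n) :
    HasDerivAt (fun t : ℂ => (1 + t • A)⁻¹) (-A) 0 := by
  have hg : HasDerivAt (fun t : ℂ => 1 + t • A) A 0 := by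
    have := ((hasDerivAt_id (0:ℂ)).smul_const A).const_add (1 : Mat n)
    simp only [id, one_smul] at this; exact this
  obtain ⟨d, hi⟩ : ∃ d, HasDerivAt (fun t : ℂ => (1 + t • A)⁻¹) d 0 :=
    ⟨_, (diffAt_inv_curve A).hasDerivAt⟩
  have hprod := (mulB n).hasDerivAt_of_bilinear (fun _ => hg) (fun _ => hi)
  have hone : (fun t : ℂ => (1 + t • A) * (1 + t • A)⁻¹) =ᶠ[nhds 0] fun _ => 1 := by
    filter_upwards [eventually_isUnit A] with t ht
    exact Matrix.mul_nonsing_inv _ ((Matrix.isUnit_iff_isUnit_det _).1 ht)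
  have hconst : HasDerivAt (fun _ : ℂ => (1 : Mat n)) 0 0 := hasDerivAt_const _ _
  have h2 : HasDerivAt (fun t : ℂ => (1 + t • A) * (1 + t • A)⁻¹)
      (mulB n (1 + (0:ℂ) • A) d + mulB n A ((1 + (0:ℂ) • A)⁻¹)) 0 := by
    exact hprod
  have h3 := hconst.congr_of_eventuallyEq hone
  have h4 := h3.unique h2
  have hd : d = -A := by
    simp only [zero_smul, add_zero, mulB_apply, one_mul, inv_one, mul_one] at h4
    -- h4 : 0 = d + A
    linear_combination (norm := abel) -h4
  rw [← hd]; exact hi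

lemma conj_hasDerivAt {n : ℕ} (A X : Mat n) :
    HasDerivAt (fun t : ℂ => (1 + t • A) * X * (1 + t • A)⁻¹) ⁅A, X⁆ 0 := by
  have hg : HasDerivAt (fun t : ℂ => 1 + t • A) A 0 := by
    have := ((hasDerivAt_id (0:ℂ)).smul_const A).const_add (1 : Mat n)
    simp only [id, one_smul] at this; exact this
  have h1 : HasDerivAt (fun t : ℂ => (1 + t • A) * X) (A * X) 0 := by
    have := (mulB n).hasDerivAt_of_bilinear (fun _ => hg) (fun _ => hasDerivAt_const (0:ℂ) X)
    simp only [mulB_apply, zero_smul, add_zero, map_zero, ContinuousLinearMap.zero_apply,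
      zero_add, one_mul] at this; exact this
  have h2 := (mulB n).hasDerivAt_of_bilinear (fun _ => h1) (fun _ => inv_curve_hasDerivAt A)
  have : HasDerivAt (fun t : ℂ => (1 + t • A) * X * (1 + t • A)⁻¹)
      ((1 + (0:ℂ) • A) * X * (-A) + A * X * ((1 + (0:ℂ) • A)⁻¹)) 0 := by
    exact h2
  have e : (1 + (0:ℂ) • A) * X * (-A) + A * X * ((1 + (0:ℂ) • A)⁻¹) = ⁅A, X⁆ := by
    simp [Ring.lie_def]; abel
  rwa [e] at this

lemma equivariant_fderiv {n : ℕ} {F : Mat n → Mat n} (hFd : Differentiable ℂ F)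
    (hFe : ∀ g X : Mat n, IsUnit g → F (g * X * g⁻¹) = g * F X * g⁻¹)
    (L A : Mat n) : fderiv ℂ F L ⁅A, L⁆ = ⁅A, F L⁆ := by
  have hc := conj_hasDerivAt A L
  have hcomp : HasDerivAt (fun t : ℂ => F ((1 + t • A) * L * (1 + t • A)⁻¹))
      (fderiv ℂ F L ⁅A, L⁆) 0 := by
    have e : (1 + (0:ℂ) • A) * L * (1 + (0:ℂ) • A)⁻¹ = L := by simp
    have hF0 : HasFDerivAt F (fderiv ℂ F L) ((1 + (0:ℂ) • A) * L * (1 + (0:ℂ) • A)⁻¹) := by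
      rw [e]; exact (hFd L).hasFDerivAt
    exact hF0.comp_hasDerivAt (0:ℂ) hc
  have hright : (fun t : ℂ => F ((1 + t • A) * L * (1 + t • A)⁻¹))
      =ᶠ[nhds 0] fun t : ℂ => (1 + t • A) * F L * (1 + t • A)⁻¹ := by
    filter_upwards [eventually_isUnit A] with t ht
    exact hFe _ _ ht
  have h2 : HasDerivAt (fun t : ℂ => F ((1 + t • A) * L * (1 + t • A)⁻¹)) ⁅A, F L⁆ 0 :=
    (conj_hasDerivAt A (F L)).congr_of_eventuallyEq hright
  exact hcomp.unique h2

lemma equivariant_comm {n : ℕ} {F : Mat n → Mat n} (hFd : Differentiable ℂ F)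
    (hFe : ∀ g X : Mat n, IsUnit g → F (g * X * g⁻¹) = g * F X * g⁻¹)
    (L : Mat n) : ⁅F L, L⁆ = 0 := by
  have h := equivariant_fderiv hFd hFe L L
  rw [lie_self, map_zero] at h
  rw [← lie_skew, ← h, neg_zero]

lemma V_fderiv {n : ℕ} {F : Mat n → Mat n} (hFd : Differentiable ℂ F)
    (R : Mat n →ₗ[ℂ] Mat n) (L W : Mat n) :
    fderiv ℂ (fun X => (2 : ℂ)⁻¹ • ⁅R (F X), X⁆) L W
      = (2 : ℂ)⁻¹ • (⁅R (fderiv ℂ F L W), L⁆ + ⁅R (F L), W⁆) := by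
  set Rc := LinearMap.toContinuousLinearMap R with hRc
  have hfun : (fun X : Mat n => (2 : ℂ)⁻¹ • ⁅R (F X), X⁆)
      = fun X => (2 : ℂ)⁻¹ • (lieB n) (Rc (F X)) X := by
    funext X; simp [hRc]
  have hf : HasFDerivAt (fun X : Mat n => Rc (F X)) (Rc.comp (fderiv ℂ F L)) L :=
    Rc.hasFDerivAt.comp L (hFd L).hasFDerivAt
  have hb := (lieB n).hasFDerivAt_of_bilinear hf (hasFDerivAt_id L)
  have hV := hb.fun_const_smul ((2 : ℂ)⁻¹)
  simp only [id_eq] at hV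
  erw [hfun, hV.fderiv]
  change (2:ℂ)⁻¹ • (lieB n (Rc (F L)) W + lieB n (Rc (fderiv ℂ F L W)) L) = _
  simp [hRc]
  abel

/-- pure algebra step -/
lemma alg_step {n : ℕ} (R : Mat n →ₗ[ℂ] Mat n)
    (hR : ∀ X Y : Mat n, ⁅R X, R Y⁆ - R (⁅R X, Y⁆ + ⁅X, R Y⁆) = -⁅X, Y⁆)
    (a b L : Mat n) (ha : ⁅a, L⁆ = 0) (hb : ⁅b, L⁆ = 0) :
    ⁅R ⁅R b, a⁆, L⁆ + ⁅R a, ⁅R b, L⁆⁆ = ⁅R ⁅R a, b⁆, L⁆ + ⁅R b, ⁅R a, L⁆⁆ := by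
  have h := hR a b
  have hw : R (⁅R a, b⁆ + ⁅a, R b⁆) = ⁅R a, R b⁆ + ⁅a, b⁆ := by
    calc R (⁅R a, b⁆ + ⁅a, R b⁆)
        = ⁅R a, R b⁆ - (⁅R a, R b⁆ - R (⁅R a, b⁆ + ⁅a, R b⁆)) := by abel
      _ = ⁅R a, R b⁆ - (-⁅a, b⁆) := by rw [h]
      _ = ⁅R a, R b⁆ + ⁅a, b⁆ := by abel
  have hdiff : ⁅R b, a⁆ - ⁅R a, b⁆ = -(⁅R a, b⁆ + ⁅a, R b⁆) := by
    rw [← lie_skew a (R b)]; abel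
  have hpq : R ⁅R b, a⁆ - R ⁅R a, b⁆ = -(⁅R a, R b⁆ + ⁅a, b⁆) := by
    rw [← map_sub, hdiff, map_neg, hw]
  have hp : R ⁅R b, a⁆ = -(⁅R a, R b⁆ + ⁅a, b⁆) + R ⁅R a, b⁆ := sub_eq_iff_eq_add.1 hpq
  rw [hp, add_lie, neg_lie, add_lie, lie_lie, lie_lie, ha, hb, lie_zero, lie_zero]
  abel

end

/-- For a linear solution `R` of the mCYBE on `M_n(ℂ)` and differentiable
conjugation-equivariant maps `F, G`, the vector fields `V_F(L) = (1/2)[R(F(L)), L]` and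
`V_G(L) = (1/2)[R(G(L)), L]` commute: `DV_F(L)[V_G(L)] = DV_G(L)[V_F(L)]`. -/
theorem statement17 (n : ℕ) (hn : 1 ≤ n)
    (R : Matrix (Fin n) (Fin n) ℂ →ₗ[ℂ] Matrix (Fin n) (Fin n) ℂ)
    (hR : ∀ X Y : Matrix (Fin n) (Fin n) ℂ,
      ⁅R X, R Y⁆ - R (⁅R X, Y⁆ + ⁅X, R Y⁆) = -⁅X, Y⁆)
    (F G : Matrix (Fin n) (Fin n) ℂ → Matrix (Fin n) (Fin n) ℂ)
    (hFd : Differentiable ℂ F) (hGd : Differentiable ℂ G)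
    (hFe : ∀ g X : Matrix (Fin n) (Fin n) ℂ, IsUnit g → F (g * X * g⁻¹) = g * F X * g⁻¹)
    (hGe : ∀ g X : Matrix (Fin n) (Fin n) ℂ, IsUnit g → G (g * X * g⁻¹) = g * G X * g⁻¹) :
    ∀ L : Matrix (Fin n) (Fin n) ℂ,
      fderiv ℂ (fun X => (2 : ℂ)⁻¹ • ⁅R (F X), X⁆) L ((2 : ℂ)⁻¹ • ⁅R (G L), L⁆)
        = fderiv ℂ (fun X => (2 : ℂ)⁻¹ • ⁅R (G X), X⁆) L ((2 : ℂ)⁻¹ • ⁅R (F L), L⁆) := by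
  intro L
  letI : LieRing (Mat n) := LieRing.ofAssociativeRing
  have ha : ⁅F L, L⁆ = 0 := equivariant_comm hFd hFe L
  have hb : ⁅G L, L⁆ = 0 := equivariant_comm hGd hGe L
  rw [V_fderiv hFd R L _, V_fderiv hGd R L _]
  have hF' : fderiv ℂ F L ((2 : ℂ)⁻¹ • ⁅R (G L), L⁆) = (2 : ℂ)⁻¹ • ⁅R (G L), F L⁆ := by
    rw [_root_.map_smul, equivariant_fderiv hFd hFe L (R (G L))]
  have hG' : fderiv ℂ G L ((2 : ℂ)⁻¹ • ⁅R (F L), L⁆) = (2 : ℂ)⁻¹ • ⁅R (F L), G L⁆ := by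
    rw [_root_.map_smul, equivariant_fderiv hGd hGe L (R (F L))]
  rw [hF', hG']
  simp only [_root_.map_smul, smul_lie, lie_smul, ← smul_add]
  exact congrArg _ (congrArg _ (alg_step R hR (F L) (G L) L ha hb))
end

section
/- Let n ≥ 1 and let F, G : M_n(ℂ) → M_n(ℂ) be conjugation-equivariant maps (no differentiability assumed). Then for every X ∈ M_n(ℂ): (i) [F(X), X] = 0; (ii) [F(X), G(X)] = 0. In particular, for a family F_1, …, F_N of conjugation-equivariant maps and any L₀ ∈ M_n(ℂ), the matrices F_1(L₀), …, F_N(L₀) pairwise commute and each commutes with L₀. -/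
private lemma key19 {n : ℕ} (F : Matrix (Fin n) (Fin n) ℂ → Matrix (Fin n) (Fin n) ℂ)
    (hF : ∀ g X : Matrix (Fin n) (Fin n) ℂ, IsUnit g → F (g * X * g⁻¹) = g * F X * g⁻¹)
    (X Y : Matrix (Fin n) (Fin n) ℂ) (hXY : Y * X = X * Y) :
    F X * Y = Y * F X := by
  obtain ⟨c, hc⟩ : ∃ c : ℂ, c ∉ spectrum ℂ (-Y) :=
    ((Matrix.finite_spectrum (-Y)).infinite_compl).nonempty
  rw [spectrum.notMem_iff] at hc
  have hg : IsUnit (Y + c • (1 : Matrix (Fin n) (Fin n) ℂ)) := by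
    have : algebraMap ℂ (Matrix (Fin n) (Fin n) ℂ) c - (-Y)
        = Y + c • 1 := by
      rw [Algebra.algebraMap_eq_smul_one, sub_neg_eq_add, add_comm]
    rwa [this] at hc
  set g := Y + c • (1 : Matrix (Fin n) (Fin n) ℂ) with hgdef
  have hdet : IsUnit g.det := (Matrix.isUnit_iff_isUnit_det g).mp hg
  have hcomm : g * X = X * g := by
    simp only [hgdef, add_mul, mul_add, hXY, Matrix.smul_mul, Matrix.mul_smul, one_mul, mul_one]
  have h1 : g * X * g⁻¹ = X := by
    rw [hcomm, mul_assoc, Matrix.mul_nonsing_inv _ hdet, mul_one]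
  have h2 := hF g X hg
  rw [h1] at h2
  have h3 : F X * g = g * F X := by
    calc F X * g = g * F X * g⁻¹ * g := by rw [← h2]
    _ = g * F X := by rw [mul_assoc, Matrix.nonsing_inv_mul _ hdet, mul_one]
  have h4 : F X * Y + c • F X = Y * F X + c • F X := by
    simpa only [hgdef, mul_add, add_mul, Matrix.mul_smul, Matrix.smul_mul, mul_one, one_mul]
      using h3
  exact add_right_cancel h4

/-- Conjugation-equivariant maps `F, G` on `M_n(ℂ)` satisfy `[F(X), X] = 0` and
`[F(X), G(X)] = 0` for every `X`; in particular, for a family `F₁, …, F_N` of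
conjugation-equivariant maps and any `L₀`, the matrices `F_k(L₀)` pairwise commute and
each commutes with `L₀`. -/
theorem statement19 (n : ℕ) (hn : 1 ≤ n)
    (F G : Matrix (Fin n) (Fin n) ℂ → Matrix (Fin n) (Fin n) ℂ)
    (hF : ∀ g X : Matrix (Fin n) (Fin n) ℂ, IsUnit g → F (g * X * g⁻¹) = g * F X * g⁻¹)
    (hG : ∀ g X : Matrix (Fin n) (Fin n) ℂ, IsUnit g → G (g * X * g⁻¹) = g * G X * g⁻¹)
    (N : ℕ) (FF : Fin N → Matrix (Fin n) (Fin n) ℂ → Matrix (Fin n) (Fin n) ℂ)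
    (hFF : ∀ (k : Fin N) (g X : Matrix (Fin n) (Fin n) ℂ), IsUnit g →
      FF k (g * X * g⁻¹) = g * FF k X * g⁻¹)
    (L₀ : Matrix (Fin n) (Fin n) ℂ) :
    (∀ X : Matrix (Fin n) (Fin n) ℂ, ⁅F X, X⁆ = 0) ∧
    (∀ X : Matrix (Fin n) (Fin n) ℂ, ⁅F X, G X⁆ = 0) ∧
    (∀ k l : Fin N, ⁅FF k L₀, FF l L₀⁆ = 0 ∧ ⁅FF k L₀, L₀⁆ = 0) := by
  refine ⟨fun X => ?_, fun X => ?_, fun k l => ⟨?_, ?_⟩⟩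
  · rw [Ring.lie_def, key19 F hF X X rfl, sub_self]
  · have hGX : G X * X = X * G X := key19 G hG X X rfl
    rw [Ring.lie_def, key19 F hF X (G X) hGX, sub_self]
  · have h : FF l L₀ * L₀ = L₀ * FF l L₀ := key19 (FF l) (hFF l) L₀ L₀ rfl
    rw [Ring.lie_def, key19 (FF k) (hFF k) L₀ (FF l L₀) h, sub_self]
  · rw [Ring.lie_def, key19 (FF k) (hFF k) L₀ L₀ rfl, sub_self]
end
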